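/- arXiv:1701.05509 — 8 statements merged into one kernel-verified Lean document; each statement's English description precedes it below -/
import Mathlib

section
/- Let Y be a metrizable locally compact topological space, E a real or complex Banach space, and G a metrizable locally compact group acting continuously and properly on Y on the right. If (y_j) is a sequence in Y with lim_{j→∞} y_j = y in Y, then for every continuous function d : Y → E vanishing at infinity one has lim_{j→∞} sup_{t∈G} ‖d(y_j·t) − d(y·t)‖ = 0. -/
open Filter Topology

/-- For a proper continuous right action of a metrizable locally compact
group `G` on a metrizable locally compact space `Y`, and `d : Y → E` continuous
vanishing at infinity (`E` a Banach space), if `y j → y∞` then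
`sup_{t ∈ G} ‖d(y j · t) − d(y∞ · t)‖ → 0`. -/
theorem stmt_0 {Y E G : Type*} [TopologicalSpace Y] [TopologicalSpace.MetrizableSpace Y]
    [LocallyCompactSpace Y]
    [NormedAddCommGroup E] [NormedSpace ℝ E] [CompleteSpace E]
    [Group G] [TopologicalSpace G] [IsTopologicalGroup G]
    [TopologicalSpace.MetrizableSpace G] [LocallyCompactSpace G]
    (act : Y → G → Y)
    (hcont : Continuous fun p : Y × G => act p.1 p.2)
    (hone : ∀ y, act y 1 = y)
    (hmul : ∀ (y : Y) (s t : G), act (act y s) t = act y (s * t))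
    (hproper : ∀ K L : Set Y, IsCompact K → IsCompact L →
      IsCompact {t : G | ∃ k ∈ K, act k t ∈ L})
    (d : Y → E) (hd : Continuous d) (hd0 : Tendsto d (cocompact Y) (𝓝 0))
    (y : ℕ → Y) (ylim : Y) (hy : Tendsto y atTop (𝓝 ylim)) :
    Tendsto (fun j => ⨆ t : G, ‖d (act (y j) t) - d (act ylim t)‖) atTop (𝓝 0) := by
  letI : MetricSpace Y := TopologicalSpace.metrizableSpaceMetric Y
  letI : MetricSpace G := TopologicalSpace.metrizableSpaceMetric G
  -- a global bound on ‖d‖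
  obtain ⟨L1, hL1c, hL1⟩ : ∃ L1 : Set Y, IsCompact L1 ∧ L1ᶜ ⊆ d ⁻¹' Metric.ball 0 1 := by
    have := hd0 (Metric.ball_mem_nhds (0 : E) one_pos)
    rw [Filter.mem_map, Filter.mem_cocompact] at this
    exact this
  obtain ⟨C, hC⟩ := hL1c.exists_bound_of_continuousOn hd.continuousOn
  have hM : ∀ x, ‖d x‖ ≤ max C 1 := by
    intro x
    by_cases hx : x ∈ L1
    · exact le_trans (hC x hx) (le_max_left _ _)
    · have := hL1 hx
      simp only [Set.mem_preimage, Metric.mem_ball, dist_zero_right] at this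
      exact le_trans this.le (le_max_right _ _)
  have hbdd : ∀ j : ℕ, BddAbove (Set.range fun t : G => ‖d (act (y j) t) - d (act ylim t)‖) := by
    intro j
    refine ⟨2 * max C 1, ?_⟩
    rintro _ ⟨t, rfl⟩
    calc ‖d (act (y j) t) - d (act ylim t)‖ ≤ ‖d (act (y j) t)‖ + ‖d (act ylim t)‖ :=
          norm_sub_le _ _
      _ ≤ max C 1 + max C 1 := add_le_add (hM _) (hM _)
      _ = 2 * max C 1 := by ring
  have hsup_nonneg : ∀ j : ℕ, 0 ≤ ⨆ t : G, ‖d (act (y j) t) - d (act ylim t)‖ := by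
    intro j
    exact le_trans (norm_nonneg _) (le_ciSup (hbdd j) (1 : G))
  rw [Metric.tendsto_atTop]
  intro ε hε
  -- compact set outside which d is small
  obtain ⟨L, hLc, hL⟩ : ∃ L : Set Y, IsCompact L ∧ Lᶜ ⊆ d ⁻¹' Metric.ball 0 (ε / 4) := by
    have := hd0 (Metric.ball_mem_nhds (0 : E) (show (0:ℝ) < ε / 4 by linarith))
    rw [Filter.mem_map, Filter.mem_cocompact] at this
    exact this
  -- compact neighborhood of ylim
  obtain ⟨K, hKc, hKn⟩ := exists_compact_mem_nhds ylim
  have hylimK : ylim ∈ K := mem_of_mem_nhds hKn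
  set T : Set G := {t : G | ∃ k ∈ K, act k t ∈ L} with hT
  have hTc : IsCompact T := hproper K L hKc hLc
  -- uniform continuity on K ×ˢ T
  have hSc : IsCompact (K ×ˢ T) := hKc.prod hTc
  have hUC := hSc.uniformContinuousOn_of_continuous
    ((hd.comp hcont).continuousOn : ContinuousOn (fun p : Y × G => d (act p.1 p.2)) (K ×ˢ T))
  rw [Metric.uniformContinuousOn_iff] at hUC
  obtain ⟨δ, hδ, hδ'⟩ := hUC (ε / 2) (by linarith)
  -- eventually y j ∈ K and dist (y j) ylim < δ
  have h1 : ∀ᶠ j in atTop, y j ∈ K := hy hKn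
  have h2 : ∀ᶠ j in atTop, dist (y j) ylim < δ := hy (Metric.ball_mem_nhds ylim hδ)
  obtain ⟨N, hN⟩ := (h1.and h2).exists_forall_of_atTop
  refine ⟨N, fun j hj => ?_⟩
  obtain ⟨hjK, hjd⟩ := hN j hj
  have key : ∀ t : G, ‖d (act (y j) t) - d (act ylim t)‖ ≤ ε / 2 := by
    intro t
    by_cases ht : t ∈ T
    · have hp : ((y j, t) : Y × G) ∈ K ×ˢ T := ⟨hjK, ht⟩
      have hq : ((ylim, t) : Y × G) ∈ K ×ˢ T := ⟨hylimK, ht⟩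
      have hdist : dist ((y j, t) : Y × G) (ylim, t) < δ := by
        rw [Prod.dist_eq]
        simp only [dist_self]
        exact max_lt hjd hδ
      have := hδ' _ hp _ hq hdist
      rw [dist_eq_norm] at this
      exact this.le
    · have h1 : act (y j) t ∉ L := fun h => ht ⟨y j, hjK, h⟩
      have h2 : act ylim t ∉ L := fun h => ht ⟨ylim, hylimK, h⟩
      have e1 := hL h1
      have e2 := hL h2
      simp only [Set.mem_preimage, Metric.mem_ball, dist_zero_right] at e1 e2
      calc ‖d (act (y j) t) - d (act ylim t)‖ ≤ ‖d (act (y j) t)‖ + ‖d (act ylim t)‖ :=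
            norm_sub_le _ _
        _ ≤ ε / 4 + ε / 4 := add_le_add e1.le e2.le
        _ = ε / 2 := by ring
  have hsup : (⨆ t : G, ‖d (act (y j) t) - d (act ylim t)‖) ≤ ε / 2 := ciSup_le key
  rw [Real.dist_eq, sub_zero, abs_of_nonneg (hsup_nonneg j)]
  linarith
end

section
/- Let G be a metrizable locally compact group equipped with a left Haar measure, Y a metrizable locally compact space with a continuous proper right action of G, and H₀ a separable complex Hilbert space. Let d : Y → K(H₀) be a norm-continuous compact-operator-valued function vanishing at infinity, and let χ : G → ℂ be continuous with compact support. Suppose A : Y → B(L²(G,H₀)) is a family of bounded operators such that for every y ∈ Y, every φ ∈ L²(G,H₀) and almost every t ∈ G one has (A(y)φ)(t) = d(y·t⁻¹) ∫_G χ(s) φ(s⁻¹t) ds. Then the map y ↦ A(y) is continuous from Y to B(L²(G,H₀)) with respect to the operator norm topology. -/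
open Filter Topology MeasureTheory
open scoped ENNReal NNReal

lemma key_norm_bound {G H₀ : Type*} [Group G] [TopologicalSpace G] [IsTopologicalGroup G]
    [TopologicalSpace.MetrizableSpace G] [LocallyCompactSpace G]
    [MeasurableSpace G] [BorelSpace G]
    (μ : Measure G) [μ.IsHaarMeasure]
    [NormedAddCommGroup H₀] [NormedSpace ℂ H₀]
    (χ : G → ℂ) (hχ : Continuous χ) (hχc : HasCompactSupport χ)
    {C : ℝ} (hC0 : 0 ≤ C)
    (φ f : Lp H₀ 2 μ)
    (hf : ∀ᵐ t ∂μ, ‖f t‖ ≤ C * ‖∫ s, χ s • (φ (s⁻¹ * t)) ∂μ‖) :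
    ‖f‖ ≤ (C * (∫⁻ s, (‖χ s‖₊ : ℝ≥0∞) ∂μ).toReal) * ‖φ‖ := by
  classical
  set a : G → ℝ≥0∞ := fun s => (‖χ s‖₊ : ℝ≥0∞) with ha
  set b : G → ℝ≥0∞ := fun u => (‖φ u‖₊ : ℝ≥0∞) with hb
  have ham : Measurable a := hχ.measurable.enorm
  have hbm : Measurable b := (Lp.stronglyMeasurable φ).enorm
  set Ia : ℝ≥0∞ := ∫⁻ s, a s ∂μ with hIadef
  have hIafin : Ia ≠ ∞ := (hχ.integrable_of_hasCompactSupport hχc).2.ne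
  set B : ℝ≥0∞ := ∫⁻ u, b u ^ (2 : ℝ) ∂μ with hBdef
  have htwo : (2 : ℝ≥0∞).toReal = (2 : ℝ) := by simp
  have hφnorm : eLpNorm (⇑φ) 2 μ = B ^ (1 / 2 : ℝ) := by
    rw [eLpNorm_eq_lintegral_rpow_enorm_toReal two_ne_zero ENNReal.ofNat_ne_top, htwo]
    rfl
  -- the convolution-type integrand
  set v : G → H₀ := fun t => ∫ s, χ s • (φ (s⁻¹ * t)) ∂μ with hv
  set J : G → ℝ≥0∞ := fun t => ∫⁻ s, a s * b (s⁻¹ * t) ∂μ with hJ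
  have hvJ : ∀ t, (‖v t‖₊ : ℝ≥0∞) ≤ J t := by
    intro t
    calc (‖v t‖₊ : ℝ≥0∞) ≤ ∫⁻ s, (‖χ s • (φ (s⁻¹ * t))‖₊ : ℝ≥0∞) ∂μ :=
        enorm_integral_le_lintegral_enorm _
    _ = J t := by
        simp only [hJ, ha, hb, nnnorm_smul, ENNReal.coe_mul]
  set K : G → ℝ≥0∞ := fun t => ∫⁻ s, a s * b (s⁻¹ * t) ^ (2 : ℝ) ∂μ with hK
  -- Cauchy-Schwarz
  have hCS : ∀ t, J t ^ (2 : ℝ) ≤ Ia * K t := by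
    intro t
    have hbt : Measurable fun s => b (s⁻¹ * t) := hbm.comp (measurable_inv.mul_const t)
    have hconj : (2 : ℝ).HolderConjugate 2 := Real.HolderConjugate.two_two
    have h12 : ∀ x : ℝ≥0∞, x ^ (1 / 2 : ℝ) * x ^ (1 / 2 : ℝ) = x := by
      intro x
      rw [← ENNReal.rpow_add_of_nonneg _ _ (by norm_num) (by norm_num)]
      norm_num
    have hsq : ∀ x : ℝ≥0∞, (x ^ (1 / 2 : ℝ)) ^ (2 : ℝ) = x := by
      intro x
      rw [← ENNReal.rpow_mul]
      norm_num
    have hcs := ENNReal.lintegral_mul_le_Lp_mul_Lq μ hconj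
      (f := fun s => a s ^ (1 / 2 : ℝ))
      (g := fun s => a s ^ (1 / 2 : ℝ) * b (s⁻¹ * t))
      ((ham.pow_const _).aemeasurable) (((ham.pow_const _).mul hbt).aemeasurable)
    have hls : ∀ s : G, ((fun s => a s ^ (1 / 2 : ℝ)) * fun s => a s ^ (1 / 2 : ℝ) * b (s⁻¹ * t)) s
        = a s * b (s⁻¹ * t) := by
      intro s
      simp only [Pi.mul_apply, ← mul_assoc, h12]
    have hJle : J t ≤ Ia ^ (1 / 2 : ℝ) * K t ^ (1 / 2 : ℝ) := by
      rw [hJ]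
      calc ∫⁻ s, a s * b (s⁻¹ * t) ∂μ
          = ∫⁻ s, ((fun s => a s ^ (1 / 2 : ℝ)) * fun s => a s ^ (1 / 2 : ℝ) * b (s⁻¹ * t)) s ∂μ :=
            lintegral_congr fun s => (hls s).symm
        _ ≤ (∫⁻ s, (a s ^ (1 / 2 : ℝ)) ^ (2 : ℝ) ∂μ) ^ (1 / 2 : ℝ) *
            (∫⁻ s, (a s ^ (1 / 2 : ℝ) * b (s⁻¹ * t)) ^ (2 : ℝ) ∂μ) ^ (1 / 2 : ℝ) := hcs
        _ = Ia ^ (1 / 2 : ℝ) * K t ^ (1 / 2 : ℝ) := by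
            congr 1
            · congr 1
              exact lintegral_congr fun s => hsq (a s)
            · congr 1
              refine lintegral_congr fun s => ?_
              rw [ENNReal.mul_rpow_of_nonneg _ _ (by norm_num : (0:ℝ) ≤ 2), hsq]
    calc J t ^ (2 : ℝ) ≤ (Ia ^ (1 / 2 : ℝ) * K t ^ (1 / 2 : ℝ)) ^ (2 : ℝ) :=
        ENNReal.rpow_le_rpow hJle (by norm_num)
      _ = Ia * K t := by
        rw [ENNReal.mul_rpow_of_nonneg _ _ (by norm_num : (0:ℝ) ≤ 2), hsq, hsq]
  -- sigma-finite carrier of f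
  have hmem : MemLp (⇑f) 2 μ := Lp.memLp f
  have hfin := hmem.aefinStronglyMeasurable two_ne_zero ENNReal.ofNat_ne_top
  set T : Set G := hfin.sigmaFiniteSet with hT
  haveI : SigmaFinite (μ.restrict T) := hfin.sigmaFinite_restrict
  have hTm : MeasurableSet T := hfin.measurableSet
  set Cₑ : ℝ≥0∞ := ENNReal.ofReal C with hCe
  have hCfin : Cₑ ≠ ∞ := ENNReal.ofReal_ne_top
  -- pointwise a.e. bound
  have hptwise : ∀ᵐ t ∂μ, (‖f t‖₊ : ℝ≥0∞) ^ (2 : ℝ) ≤ Cₑ ^ (2 : ℝ) * J t ^ (2 : ℝ) := by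
    filter_upwards [hf] with t ht
    have h1 : (‖f t‖₊ : ℝ≥0∞) ≤ Cₑ * (‖v t‖₊ : ℝ≥0∞) := by
      rw [← enorm_eq_nnnorm, ← enorm_eq_nnnorm, ← ofReal_norm, ← ofReal_norm, hCe,
        ← ENNReal.ofReal_mul hC0]
      exact ENNReal.ofReal_le_ofReal ht
    calc (‖f t‖₊ : ℝ≥0∞) ^ (2 : ℝ) ≤ (Cₑ * J t) ^ (2 : ℝ) := by
          refine ENNReal.rpow_le_rpow ?_ (by norm_num)
          exact h1.trans (mul_le_mul_right (hvJ t) _)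
      _ = Cₑ ^ (2 : ℝ) * J t ^ (2 : ℝ) := ENNReal.mul_rpow_of_nonneg _ _ (by norm_num)
  -- restriction to the sigma-finite carrier
  have hsplit : ∫⁻ t, (‖f t‖₊ : ℝ≥0∞) ^ (2 : ℝ) ∂μ
      = ∫⁻ t in T, (‖f t‖₊ : ℝ≥0∞) ^ (2 : ℝ) ∂μ := by
    rw [← lintegral_add_compl (fun t => (‖f t‖₊ : ℝ≥0∞) ^ (2 : ℝ)) hTm]
    have h0 : ∫⁻ t in Tᶜ, (‖f t‖₊ : ℝ≥0∞) ^ (2 : ℝ) ∂μ = 0 := by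
      have h0' : ∀ᵐ t ∂(μ.restrict Tᶜ), (‖f t‖₊ : ℝ≥0∞) ^ (2 : ℝ) = 0 := by
        filter_upwards [hfin.ae_eq_zero_compl] with t ht
        simp [ht, ENNReal.zero_rpow_of_pos (by norm_num : (0:ℝ) < 2)]
      rw [lintegral_congr_ae h0', lintegral_zero]
    rw [h0, add_zero]
  -- support restriction for the s-variable
  set ν : Measure G := μ.restrict (tsupport χ) with hν
  haveI : IsFiniteMeasure ν := by
    constructor
    rw [hν, Measure.restrict_apply_univ]
    exact hχc.measure_lt_top
  have hsupp : ∀ h : G → ℝ≥0∞, (∫⁻ s, a s * h s ∂μ) = ∫⁻ s, a s * h s ∂ν := by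
    intro h
    rw [hν, ← lintegral_indicator (isClosed_tsupport χ).measurableSet]
    refine lintegral_congr fun s => ?_
    by_cases hs : s ∈ tsupport χ
    · simp [Set.indicator_of_mem hs]
    · simp [Set.indicator_of_notMem hs, ha, image_eq_zero_of_notMem_tsupport hs]
  -- a second countable open neighbourhood of the support of χ
  obtain ⟨K₀, hKcomp, hKsub⟩ := exists_compact_superset hχc
  set U : Set G := interior K₀ with hUdef
  have hUm : MeasurableSet U := isOpen_interior.measurableSet
  have hSU : tsupport χ ⊆ U := hKsub
  haveI : SecondCountableTopology ↥U := by
    letI : MetricSpace G := TopologicalSpace.metrizableSpaceMetric G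
    exact (hKcomp.isSeparable.mono interior_subset).secondCountableTopology
  -- joint measurability of the integrand via the second countable piece
  set e : G × ↥U → G × G := fun p => (p.1, ↑p.2) with he
  have hembed : MeasurableEmbedding e :=
    MeasurableEmbedding.id.prodMap (MeasurableEmbedding.subtype_coe hUm)
  set Φ : G × ↥U → ℝ≥0∞ := fun p => a ↑p.2 * b ((↑p.2 : G)⁻¹ * p.1) ^ (2 : ℝ) with hΦ
  have hq : Continuous fun p : G × ↥U => ((p.2 : G))⁻¹ * p.1 :=
    ((continuous_subtype_val.comp continuous_snd).inv).mul continuous_fst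
  have hΦm : Measurable Φ :=
    (ham.comp (measurable_subtype_coe.comp measurable_snd)).mul
      ((hbm.comp hq.measurable).pow_const _)
  set Ft : G × G → ℝ≥0∞ := Function.extend e Φ 0 with hFtdef
  have hFtm : Measurable Ft := hembed.measurable_extend hΦm measurable_const
  have hFteq : ∀ t s, Ft (t, s) = a s * b (s⁻¹ * t) ^ (2 : ℝ) := by
    intro t s
    by_cases hs : s ∈ U
    · have hts : (t, s) = e (t, ⟨s, hs⟩) := rfl
      rw [hFtdef, hts, hembed.injective.extend_apply]
    · have hnot : ¬∃ p : G × ↥U, e p = (t, s) := by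
        rintro ⟨⟨t', u⟩, hp⟩
        apply hs
        have hu : (u : G) = s := congrArg Prod.snd hp
        rw [← hu]; exact u.2
      rw [hFtdef, Function.extend_apply' _ _ _ hnot]
      have ha0 : a s = 0 := by
        have : χ s = 0 := image_eq_zero_of_notMem_tsupport (fun hmem => hs (hSU hmem))
        simp [ha, this]
      simp [ha0]
  -- Fubini-Tonelli over the sigma-finite carrier
  have hswap : ∫⁻ t in T, K t ∂μ ≤ Ia * B := by
    have hswap0 :
        ∫⁻ t in T, ∫⁻ s, Ft (t, s) ∂ν ∂μ = ∫⁻ s, ∫⁻ t in T, Ft (t, s) ∂μ ∂ν :=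
      lintegral_lintegral_swap (f := fun t s => Ft (t, s)) (by exact hFtm.aemeasurable)
    simp_rw [hFteq] at hswap0
    have hbti : ∀ s : G, (∫⁻ t in T, b (s⁻¹ * t) ^ (2 : ℝ) ∂μ) ≤ B := by
      intro s
      calc ∫⁻ t in T, b (s⁻¹ * t) ^ (2 : ℝ) ∂μ ≤ ∫⁻ t, b (s⁻¹ * t) ^ (2 : ℝ) ∂μ :=
          lintegral_mono' Measure.restrict_le_self le_rfl
        _ = B := lintegral_mul_left_eq_self (fun u => b u ^ (2 : ℝ)) s⁻¹
    calc ∫⁻ t in T, K t ∂μ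
        = ∫⁻ t in T, ∫⁻ s, a s * b (s⁻¹ * t) ^ (2 : ℝ) ∂ν ∂μ :=
          lintegral_congr fun t => hsupp _
      _ = ∫⁻ s, ∫⁻ t in T, a s * b (s⁻¹ * t) ^ (2 : ℝ) ∂μ ∂ν := hswap0
      _ = ∫⁻ s, a s * ∫⁻ t in T, b (s⁻¹ * t) ^ (2 : ℝ) ∂μ ∂ν := by
          refine lintegral_congr fun s => ?_
          exact lintegral_const_mul' _ _ ENNReal.coe_ne_top
      _ ≤ ∫⁻ s, a s * B ∂ν := by
          refine lintegral_mono fun s => ?_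
          exact mul_le_mul_right (hbti s) _
      _ = (∫⁻ s, a s ∂ν) * B := lintegral_mul_const _ ham
      _ ≤ Ia * B := by
          refine mul_le_mul_left ?_ _
          exact lintegral_mono' Measure.restrict_le_self le_rfl
  -- main estimate on the lintegral
  have hmain : ∫⁻ t, (‖f t‖₊ : ℝ≥0∞) ^ (2 : ℝ) ∂μ ≤ (Cₑ * Ia) ^ (2 : ℝ) * B := by
    have h1 : ∫⁻ t in T, (‖f t‖₊ : ℝ≥0∞) ^ (2 : ℝ) ∂μ
        ≤ ∫⁻ t in T, Cₑ ^ (2 : ℝ) * J t ^ (2 : ℝ) ∂μ :=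
      lintegral_mono_ae (ae_restrict_of_ae hptwise)
    have h2 : ∫⁻ t in T, Cₑ ^ (2 : ℝ) * J t ^ (2 : ℝ) ∂μ
        ≤ ∫⁻ t in T, (Cₑ ^ (2 : ℝ) * Ia) * K t ∂μ := by
      refine lintegral_mono fun t => ?_
      rw [mul_assoc]
      exact mul_le_mul_right (hCS t) _
    have h3 : ∫⁻ t in T, (Cₑ ^ (2 : ℝ) * Ia) * K t ∂μ ≤ (Cₑ ^ (2 : ℝ) * Ia) * (Ia * B) := by
      rw [lintegral_const_mul' _ _ (by
        exact ENNReal.mul_ne_top (ENNReal.rpow_ne_top_of_nonneg (by norm_num) hCfin) hIafin)]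
      exact mul_le_mul_right hswap _
    have h4 : (Cₑ ^ (2 : ℝ) * Ia) * (Ia * B) = (Cₑ * Ia) ^ (2 : ℝ) * B := by
      rw [ENNReal.mul_rpow_of_nonneg _ _ (by norm_num : (0:ℝ) ≤ 2)]
      have : Ia ^ (2 : ℝ) = Ia * Ia := by
        rw [show (2 : ℝ) = 1 + 1 by norm_num,
          ENNReal.rpow_add_of_nonneg _ _ zero_le_one zero_le_one, ENNReal.rpow_one]
      rw [this]
      ring
    calc ∫⁻ t, (‖f t‖₊ : ℝ≥0∞) ^ (2 : ℝ) ∂μ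
        = ∫⁻ t in T, (‖f t‖₊ : ℝ≥0∞) ^ (2 : ℝ) ∂μ := hsplit
      _ ≤ (Cₑ ^ (2 : ℝ) * Ia) * (Ia * B) := le_trans h1 (le_trans h2 h3)
      _ = (Cₑ * Ia) ^ (2 : ℝ) * B := h4
  -- conclude for eLpNorms
  have hsq : ∀ x : ℝ≥0∞, (x ^ (2 : ℝ)) ^ (1 / 2 : ℝ) = x := by
    intro x
    rw [← ENNReal.rpow_mul]
    norm_num
  have help : eLpNorm (⇑f) 2 μ ≤ (Cₑ * Ia) * eLpNorm (⇑φ) 2 μ := by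
    rw [eLpNorm_eq_lintegral_rpow_enorm_toReal two_ne_zero ENNReal.ofNat_ne_top, htwo, hφnorm]
    calc (∫⁻ t, (‖f t‖₊ : ℝ≥0∞) ^ (2 : ℝ) ∂μ) ^ (1 / 2 : ℝ)
        ≤ ((Cₑ * Ia) ^ (2 : ℝ) * B) ^ (1 / 2 : ℝ) :=
          ENNReal.rpow_le_rpow hmain (by norm_num)
      _ = (Cₑ * Ia) * B ^ (1 / 2 : ℝ) := by
          rw [ENNReal.mul_rpow_of_nonneg _ _ (by norm_num : (0:ℝ) ≤ 1/2), hsq]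
  -- back to real norms
  have hfinR : (Cₑ * Ia) * eLpNorm (⇑φ) 2 μ ≠ ∞ :=
    ENNReal.mul_ne_top (ENNReal.mul_ne_top hCfin hIafin) (Lp.eLpNorm_ne_top φ)
  calc ‖f‖ = (eLpNorm (⇑f) 2 μ).toReal := Lp.norm_def f
    _ ≤ ((Cₑ * Ia) * eLpNorm (⇑φ) 2 μ).toReal := ENNReal.toReal_mono hfinR help
    _ = (C * Ia.toReal) * ‖φ‖ := by
        rw [ENNReal.toReal_mul, ENNReal.toReal_mul, ENNReal.toReal_ofReal hC0, Lp.norm_def]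

/-- continuity in operator norm of the family of product–convolution
operators `A(y)φ(t) = d(y·t⁻¹) ∫_G χ(s) φ(s⁻¹t) ds` on `L²(G,H₀)`, for a proper
continuous action of a metrizable locally compact group `G` on a metrizable
locally compact space `Y`, `d` a compact-operator-valued norm-continuous function
vanishing at infinity, and `χ` continuous with compact support. -/
theorem stmt_1 {Y G H₀ : Type*}
    [TopologicalSpace Y] [TopologicalSpace.MetrizableSpace Y] [LocallyCompactSpace Y]
    [Group G] [TopologicalSpace G] [IsTopologicalGroup G]
    [TopologicalSpace.MetrizableSpace G] [LocallyCompactSpace G]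
    [MeasurableSpace G] [BorelSpace G]
    (μ : Measure G) [μ.IsHaarMeasure]
    [NormedAddCommGroup H₀] [InnerProductSpace ℂ H₀] [CompleteSpace H₀]
    [TopologicalSpace.SeparableSpace H₀]
    (act : Y → G → Y)
    (hcont : Continuous fun p : Y × G => act p.1 p.2)
    (hone : ∀ y, act y 1 = y)
    (hmul : ∀ (y : Y) (s t : G), act (act y s) t = act y (s * t))
    (hproper : ∀ K L : Set Y, IsCompact K → IsCompact L →
      IsCompact {t : G | ∃ k ∈ K, act k t ∈ L})
    (d : Y → H₀ →L[ℂ] H₀) (hd : Continuous d)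
    (hdcpt : ∀ y, IsCompactOperator (d y))
    (hd0 : Tendsto d (cocompact Y) (𝓝 0))
    (χ : G → ℂ) (hχ : Continuous χ) (hχc : HasCompactSupport χ)
    (A : Y → (Lp H₀ 2 μ →L[ℂ] Lp H₀ 2 μ))
    (hA : ∀ (y : Y) (φ : Lp H₀ 2 μ), ∀ᵐ t ∂μ,
      (A y φ) t = d (act y t⁻¹) (∫ s, χ s • (φ (s⁻¹ * t)) ∂μ)) :
    Continuous A := by
  have hI0 : (0:ℝ) ≤ (∫⁻ s, (‖χ s‖₊ : ℝ≥0∞) ∂μ).toReal := ENNReal.toReal_nonneg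
  -- the quantitative operator norm bound
  have hbound : ∀ y y' : Y, ∀ C : ℝ, 0 ≤ C →
      (∀ t : G, ‖d (act y t⁻¹) - d (act y' t⁻¹)‖ ≤ C) →
      ‖A y - A y'‖ ≤ C * (∫⁻ s, (‖χ s‖₊ : ℝ≥0∞) ∂μ).toReal := by
    intro y y' C hC0 hC
    refine ContinuousLinearMap.opNorm_le_bound _ (mul_nonneg hC0 hI0) fun φ => ?_
    rw [ContinuousLinearMap.sub_apply]
    refine key_norm_bound μ χ hχ hχc hC0 φ (A y φ - A y' φ) ?_
    filter_upwards [hA y φ, hA y' φ, Lp.coeFn_sub (A y φ) (A y' φ)] with t h1 h2 h3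
    rw [h3]
    simp only [Pi.sub_apply]
    rw [h1, h2, ← ContinuousLinearMap.sub_apply]
    exact le_trans (ContinuousLinearMap.le_opNorm _ _)
      (mul_le_mul_of_nonneg_right (hC t) (norm_nonneg _))
  set I : ℝ := (∫⁻ s, (‖χ s‖₊ : ℝ≥0∞) ∂μ).toReal with hIdef
  rw [continuous_iff_continuousAt]
  intro y
  rw [ContinuousAt, tendsto_iff_norm_sub_tendsto_zero, Metric.tendsto_nhds]
  intro ε hε
  have hI1 : (0:ℝ) < I + 1 := by linarith
  set δ : ℝ := ε / (2 * (I + 1)) with hδdef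
  have hδpos : 0 < δ := by positivity
  -- compact set outside which d is small
  have hball : Metric.ball (0 : H₀ →L[ℂ] H₀) (δ/2) ∈ 𝓝 (0 : H₀ →L[ℂ] H₀) :=
    Metric.ball_mem_nhds _ (by positivity)
  obtain ⟨L, hLcomp, hLsub⟩ := mem_cocompact.mp (hd0 hball)
  obtain ⟨K, hKcomp, hKnhds⟩ := exists_compact_mem_nhds y
  have hyK : y ∈ K := mem_of_mem_nhds hKnhds
  set T₀ : Set G := {t : G | ∃ k ∈ K, act k t ∈ L} with hT₀
  have hT₀comp : IsCompact T₀ := hproper K L hKcomp hLcomp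
  set T' : Set G := (fun t : G => t⁻¹) '' T₀ with hT'
  have hT'comp : IsCompact T' := hT₀comp.image continuous_inv
  haveI : CompactSpace ↥T' := isCompact_iff_compactSpace.mp hT'comp
  set h : C(Y × G, H₀ →L[ℂ] H₀) :=
    ⟨fun p => d (act p.1 p.2⁻¹),
      hd.comp (hcont.comp (continuous_fst.prodMk continuous_snd.inv))⟩ with hh
  set ψ : Y → C(↥T', H₀ →L[ℂ] H₀) := fun z => (h.curry z).restrict T' with hψ
  have hψcont : Continuous ψ := (ContinuousMap.continuous_restrict T').comp h.curry.continuous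
  have hev1 : ∀ᶠ y' in 𝓝 y, dist (ψ y') (ψ y) < δ/2 :=
    Metric.tendsto_nhds.mp (hψcont.tendsto y) (δ/2) (by positivity)
  have hev : ∀ᶠ y' in 𝓝 y, ∀ t : G, ‖d (act y' t⁻¹) - d (act y t⁻¹)‖ ≤ δ := by
    filter_upwards [hev1, hKnhds] with y' hy'd hy'K
    intro t
    by_cases ht : t ∈ T'
    · calc ‖d (act y' t⁻¹) - d (act y t⁻¹)‖
          = dist (ψ y' ⟨t, ht⟩) (ψ y ⟨t, ht⟩) := by
            simp [hψ, hh, ContinuousMap.restrict_apply, ContinuousMap.curry_apply, dist_eq_norm]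
        _ ≤ dist (ψ y') (ψ y) := ContinuousMap.dist_apply_le_dist _
        _ ≤ δ := le_of_lt (lt_of_lt_of_le hy'd (by linarith))
    · have htL : ∀ k ∈ K, act k t⁻¹ ∉ L := by
        intro k hk hkL
        exact ht ⟨t⁻¹, ⟨k, hk, hkL⟩, inv_inv t⟩
      have hs : ∀ z ∈ K, ‖d (act z t⁻¹)‖ < δ/2 := by
        intro z hz
        have hmem : act z t⁻¹ ∈ Lᶜ := htL z hz
        have := hLsub hmem
        simpa [mem_ball_zero_iff] using this
      calc ‖d (act y' t⁻¹) - d (act y t⁻¹)‖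
          ≤ ‖d (act y' t⁻¹)‖ + ‖d (act y t⁻¹)‖ := norm_sub_le _ _
        _ ≤ δ := by
            have h1 := hs y' hy'K
            have h2 := hs y hyK
            linarith
  filter_upwards [hev] with y' h'
  have hb := hbound y' y δ hδpos.le h'
  have hlt : δ * I < ε := by
    have h1 : δ * I ≤ δ * (I + 1) := by nlinarith
    have h2 : δ * (I + 1) = ε / 2 := by
      rw [hδdef]
      field_simp
    linarith
  have hnn : (0:ℝ) ≤ ‖A y' - A y‖ := norm_nonneg _
  rw [Real.dist_eq, sub_zero, abs_of_nonneg hnn]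
  calc ‖A y' - A y‖ ≤ δ * I := hb
    _ < ε := hlt
end

section
/- Let X × G → X be a continuous right action of a connected locally compact topological group G on a quasi-compact topological space X (compact but not necessarily Hausdorff). Assume: (1) A⁻, A⁺ ⊆ X are closed G-invariant subsets which have disjoint open neighborhoods; (2) for every y in Y := X ∖ (A⁻ ∪ A⁺) there exist nets {t_j⁻}_{j∈J} and {t_j⁺}_{j∈J} in G for which the net {y·t_j⁻}_{j∈J} has a limit point in A⁻ and the net {y·t_j⁺}_{j∈J} has a limit point in A⁺. Then Y is an open G-invariant subset of X and the orbit space Y/G, with the quotient topology, is quasi-compact. -/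
open Filter Topology

/-- for a continuous right action of a connected locally compact group `G`
on a quasi-compact space `X`, if `A⁻, A⁺` are closed invariant sets with disjoint open
neighborhoods such that the orbit of every point `y` of `Y := X ∖ (A⁻ ∪ A⁺)` has cluster
points in both `A⁻` and `A⁺`, then `Y` is open and invariant and the orbit space `Y/G`
(with the quotient topology) is quasi-compact. -/
theorem stmt_6 {X G : Type*} [TopologicalSpace X] [CompactSpace X]
    [Group G] [TopologicalSpace G] [IsTopologicalGroup G]
    [LocallyCompactSpace G] [ConnectedSpace G]
    (act : X → G → X)
    (hcont : Continuous fun p : X × G => act p.1 p.2)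
    (hone : ∀ x, act x 1 = x)
    (hmul : ∀ (x : X) (s t : G), act (act x s) t = act x (s * t))
    (Am Ap : Set X) (hAmcl : IsClosed Am) (hApcl : IsClosed Ap)
    (hAminv : ∀ t : G, (fun x => act x t) '' Am = Am)
    (hApinv : ∀ t : G, (fun x => act x t) '' Ap = Ap)
    (hsep : ∃ Um Up : Set X, IsOpen Um ∧ IsOpen Up ∧ Am ⊆ Um ∧ Ap ⊆ Up ∧ Um ∩ Up = ∅)
    (hlim : ∀ y ∈ (Am ∪ Ap)ᶜ,
      (closure (Set.range fun t => act y t) ∩ Am).Nonempty ∧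
      (closure (Set.range fun t => act y t) ∩ Ap).Nonempty) :
    IsOpen (Am ∪ Ap)ᶜ ∧
    (∀ t : G, (fun x => act x t) '' (Am ∪ Ap)ᶜ = (Am ∪ Ap)ᶜ) ∧
    CompactSpace
      (Quot fun a b : ((Am ∪ Ap)ᶜ : Set X) => ∃ t : G, act a.1 t = b.1) := by
  obtain ⟨Um, Up, hUmo, hUpo, hAmU, hApU, hdisj⟩ := hsep
  set Y : Set X := (Am ∪ Ap)ᶜ with hY
  -- bijectivity of each translation
  have hbij : ∀ t : G, Function.Bijective (fun x => act x t) := by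
    intro t
    refine Function.bijective_iff_has_inverse.2 ⟨fun x => act x t⁻¹, ?_, ?_⟩
    · intro x; simp [hmul, hone]
    · intro x; simp [hmul, hone]
  have hinv : ∀ t : G, (fun x => act x t) '' Y = Y := by
    intro t
    rw [hY, Set.image_compl_eq (hbij t), Set.image_union, hAminv, hApinv]
  refine ⟨(hAmcl.union hApcl).isOpen_compl, hinv, ?_⟩
  -- the compact "fundamental" set
  set K : Set X := (Um ∪ Up)ᶜ with hK
  have hKY : K ⊆ Y := by
    intro x hx
    simp only [hK, Set.mem_compl_iff, Set.mem_union] at hx ⊢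
    exact fun h => hx (h.imp (fun h' => hAmU h') (fun h' => hApU h'))
  have hKcomp : IsCompact K := ((hUmo.union hUpo).isClosed_compl).isCompact
  -- every orbit of a point of Y meets K
  have hmeet : ∀ y ∈ Y, ∃ t : G, act y t ∈ K := by
    intro y hy
    by_contra h
    push_neg at h
    have horb : Set.range (fun t => act y t) ⊆ Um ∪ Up := by
      rintro _ ⟨t, rfl⟩
      have := h t
      rw [hK, Set.mem_compl_iff, not_not] at this
      exact this
    have hconn : IsPreconnected (Set.range fun t => act y t) := by
      have : Continuous fun t : G => act y t :=
        hcont.comp (continuous_const.prodMk continuous_id)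
      exact (isConnected_range this).isPreconnected
    have hd : Disjoint Um Up := Set.disjoint_iff_inter_eq_empty.2 hdisj
    obtain ⟨⟨am, ham, hamA⟩, ⟨ap, hap, hapA⟩⟩ := hlim y hy
    rcases hconn.subset_or_subset hUmo hUpo hd horb with hsub | hsub
    · -- closure ⊆ Upᶜ, contradicts ap
      have h1 : closure (Set.range fun t => act y t) ⊆ Upᶜ := by
        apply closure_minimal _ hUpo.isClosed_compl
        intro x hx
        intro hxUp
        exact (Set.eq_empty_iff_forall_notMem.1 hdisj x) ⟨hsub hx, hxUp⟩
      exact h1 hap (hApU hapA)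
    · have h1 : closure (Set.range fun t => act y t) ⊆ Umᶜ := by
        apply closure_minimal _ hUmo.isClosed_compl
        intro x hx
        intro hxUm
        exact (Set.eq_empty_iff_forall_notMem.1 hdisj x) ⟨hxUm, hsub hx⟩
      exact h1 ham (hAmU hamA)
  -- compactness of the quotient
  set r : Y → Y → Prop := fun a b => ∃ t : G, act a.1 t = b.1 with hr
  have hTcomp : IsCompact (Subtype.val ⁻¹' K : Set Y) := by
    rw [Topology.IsEmbedding.subtypeVal.isCompact_iff]
    have : Subtype.val '' (Subtype.val ⁻¹' K : Set Y) = K := by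
      rw [Subtype.image_preimage_coe]
      exact Set.inter_eq_right.2 hKY
    rw [this]
    exact hKcomp
  have hcover : Quot.mk r '' (Subtype.val ⁻¹' K : Set Y) = Set.univ := by
    ext q
    simp only [Set.mem_univ, iff_true]
    induction q using Quot.ind with
    | _ y =>
      obtain ⟨t, ht⟩ := hmeet y.1 y.2
      refine ⟨⟨act y.1 t, hKY ht⟩, ht, ?_⟩
      apply Quot.sound
      exact ⟨t⁻¹, by simp [hmul, hone]⟩
  constructor
  rw [← hcover]
  exact hTcomp.image continuous_quot_mk
end

section
/- Let H₀ be a separable complex Hilbert space and g : ℝ → B(H₀) a norm-continuous function such that 0 ≤ g(t) ≤ 1 in the Loewner order (each g(t) is a positive self-adjoint contraction) for every t ∈ ℝ, and lim_{t→∞} ‖g(t) − 1‖ = 0. If η ∈ L²(ℝ,H₀) satisfies η(t) = 2 g(t) (β∗η)(t) = 2 g(t) ∫₀^∞ e^{−s} η(t−s) ds for almost every t ∈ ℝ, then η = 0. Equivalently, Ker(1 − 2M_gT) = {0}, where M_g is the multiplication operator (M_gη)(t) = g(t)η(t) on L²(ℝ,H₀). -/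
open MeasureTheory Set Filter Topology

/-- let `H₀` be a separable complex Hilbert space and `g : ℝ → B(H₀)`
norm-continuous with `0 ≤ g(t) ≤ 1` in the Loewner order and `‖g(t) − 1‖ → 0` as
`t → ∞`. If `η ∈ L²(ℝ,H₀)` satisfies `η(t) = 2 g(t) ∫₀^∞ e^{−s} η(t−s) ds` for a.e.
`t`, then `η = 0`; i.e. `Ker(1 − 2M_gT) = {0}`. -/
theorem stmt_8 {H₀ : Type*} [NormedAddCommGroup H₀] [InnerProductSpace ℂ H₀]
    [CompleteSpace H₀] [TopologicalSpace.SeparableSpace H₀]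
    (g : ℝ → H₀ →L[ℂ] H₀) (hg_cont : Continuous g)
    (hg_pos : ∀ t : ℝ, (g t).IsPositive)
    (hg_le : ∀ t : ℝ, (1 - g t).IsPositive)
    (hg_lim : Tendsto (fun t => ‖g t - 1‖) atTop (𝓝 0))
    (η : Lp H₀ 2 (volume : Measure ℝ))
    (hη : ∀ᵐ t ∂(volume : Measure ℝ),
      η t = (2 : ℝ) • (g t) (∫ s in Ioi (0 : ℝ), Real.exp (-s) • η (t - s))) :
    η = 0 := by
  classical
  set f : ℝ → H₀ := fun s => Real.exp s • η s with hfdef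
  have hηm : AEStronglyMeasurable (fun s : ℝ => η s) volume := Lp.aestronglyMeasurable η
  have hfm : AEStronglyMeasurable f volume :=
    (Real.continuous_exp.aestronglyMeasurable).smul hηm
  have hE : Integrable (fun s : ℝ => ‖η s‖ ^ 2) volume :=
    (memLp_two_iff_integrable_sq_norm hηm).1 (Lp.memLp η)
  set E : ℝ := ∫ s : ℝ, ‖η s‖ ^ 2 with hEdef
  have hE0 : 0 ≤ E := integral_nonneg fun s => by positivity
  -- integrability of f on half-lines
  have h_int : ∀ t : ℝ, IntegrableOn f (Iic t) volume := by
    intro t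
    have hb1 : IntegrableOn (fun s => Real.exp t * Real.exp s) (Iic t) volume :=
      (integrableOn_exp_Iic t).const_mul _
    have hb2 : IntegrableOn (fun s => (Real.exp t * Real.exp s + ‖η s‖ ^ 2) / 2) (Iic t) volume :=
      (hb1.add hE.integrableOn).div_const 2
    refine Integrable.mono' hb2 hfm.restrict ?_
    refine (ae_restrict_mem measurableSet_Iic).mono fun s hs => ?_
    have hs' : s ≤ t := hs
    have h1 : ‖f s‖ = Real.exp s * ‖η s‖ := by
      simp [hfdef, norm_smul, abs_of_pos (Real.exp_pos s)]
    have h2 : Real.exp s ≤ Real.exp t := Real.exp_le_exp.2 hs'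
    nlinarith [Real.exp_pos s, norm_nonneg (η s), sq_nonneg (Real.exp s - ‖η s‖),
      mul_le_mul_of_nonneg_right h2 (Real.exp_pos s).le]
  set F : ℝ → H₀ := fun t => ∫ s in Iic t, f s with hFdef
  -- splitting of F
  have h_ii : ∀ a b : ℝ, IntervalIntegrable f volume a b := by
    intro a b
    exact ((h_int (max a b)).mono_set (fun x hx => hx.2)).intervalIntegrable
  have hFsplit : ∀ t : ℝ, F t = F 0 + ∫ s in (0:ℝ)..t, f s := by
    have key : ∀ a b : ℝ, a ≤ b → F b = F a + ∫ s in Ioc a b, f s := by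
      intro a b hab
      rw [hFdef]
      simp only
      rw [← Iic_union_Ioc_eq_Iic hab,
        setIntegral_union (Iic_disjoint_Ioc le_rfl) measurableSet_Ioc (h_int a)
          ((h_int b).mono_set Ioc_subset_Iic_self)]
    intro t
    rcases le_total 0 t with h|h
    · rw [key 0 t h, intervalIntegral.integral_of_le h]
    · have := key t 0 h
      rw [intervalIntegral.integral_of_ge h]
      rw [this]
      abel
  have hFcont : Continuous F := by
    have : Continuous fun t : ℝ => F 0 + ∫ s in (0:ℝ)..t, f s :=
      continuous_const.add (intervalIntegral.continuous_primitive h_ii 0)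
    exact this.congr fun t => (hFsplit t).symm
  -- change of variables
  have hconv : ∀ t : ℝ, (∫ s in Ioi (0:ℝ), Real.exp (-s) • η (t - s)) = Real.exp (-t) • F t := by
    intro t
    have hmp : MeasurePreserving (fun x : ℝ => t - x) volume volume :=
      Measure.measurePreserving_sub_left volume t
    have hemb : MeasurableEmbedding (fun x : ℝ => t - x) :=
      (MeasurableEquiv.subLeft t).measurableEmbedding
    have hpre : (fun x : ℝ => t - x) ⁻¹' (Ioi (0:ℝ)) = Iio t := by
      ext x; simp [sub_pos]
    have h1 := hmp.setIntegral_preimage_emb hemb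
      (fun s => Real.exp (-s) • η (t - s)) (Ioi (0:ℝ))
    rw [hpre] at h1
    rw [← h1]
    have h2 : ∀ x : ℝ, Real.exp (-(t - x)) • η (t - (t - x))
        = Real.exp (-t) • (Real.exp x • η x) := by
      intro x
      rw [sub_sub_cancel, smul_smul, ← Real.exp_add]
      ring_nf
    calc (∫ x in Iio t, Real.exp (-(t - x)) • η (t - (t - x)))
        = ∫ x in Iio t, Real.exp (-t) • (Real.exp x • η x) := by
          exact setIntegral_congr_fun measurableSet_Iio fun x _ => h2 x
      _ = Real.exp (-t) • ∫ x in Iio t, Real.exp x • η x := integral_smul _ _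
      _ = Real.exp (-t) • F t := by
          rw [hFdef]
          congr 1
          exact setIntegral_congr_set Iio_ae_eq_Iic
  -- the a.e. pointwise ODE form
  have hae : ∀ᵐ s ∂(volume : Measure ℝ), f s = (2:ℝ) • (g s) (F s) := by
    filter_upwards [hη] with s hs
    rw [hfdef]
    simp only
    rw [hs, hconv s]
    rw [smul_comm, (g s).map_smul_of_tower, smul_smul, smul_smul, mul_assoc,
      ← Real.exp_add, add_neg_cancel, Real.exp_zero, mul_one]
  set G : ℝ → H₀ := fun s => (2:ℝ) • (g s) (F s) with hGdef
  have hG_cont : Continuous G := by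
    have : Continuous fun s => (g s) (F s) := hg_cont.clm_apply hFcont
    exact this.const_smul _
  have hFG : ∀ t : ℝ, F t = F 0 + ∫ s in (0:ℝ)..t, G s := by
    intro t
    rw [hFsplit t]
    congr 1
    apply intervalIntegral.integral_congr_ae
    filter_upwards [hae] with s hs _
    exact hs
  have hF' : ∀ t : ℝ, HasDerivAt F (G t) t := by
    intro t
    have h1 : HasDerivAt (fun u => F 0 + ∫ s in (0:ℝ)..u, G s) (G t) t := by
      refine HasDerivAt.const_add _ ?_
      exact intervalIntegral.integral_hasDerivAt_right (hG_cont.intervalIntegrable 0 t)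
        (hG_cont.aestronglyMeasurable.stronglyMeasurableAtFilter) hG_cont.continuousAt
    exact h1.congr_of_eventuallyEq (Filter.Eventually.of_forall fun u => hFG u)
  -- the squared norm function
  set φ : ℝ → ℝ := fun t => ((inner ℂ (F t) (F t) : ℂ)).re with hφdef
  have hresym : ∀ x y : H₀, ((inner ℂ x y : ℂ)).re = ((inner ℂ y x : ℂ)).re := by
    intro x y; rw [← inner_conj_symm]; exact Complex.conj_re _
  have hφ' : ∀ t : ℝ, HasDerivAt φ (4 * ((inner ℂ ((g t) (F t)) (F t) : ℂ)).re) t := by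
    intro t
    have h1 : HasDerivAt (fun u => (inner ℂ (F u) (F u) : ℂ))
        ((inner ℂ (F t) (G t) : ℂ) + (inner ℂ (G t) (F t) : ℂ)) t := (hF' t).inner ℂ (hF' t)
    have h2 := Complex.reCLM.hasFDerivAt.comp_hasDerivAt t h1
    have h3 : Complex.reCLM ((inner ℂ (F t) (G t) : ℂ) + (inner ℂ (G t) (F t) : ℂ))
        = 4 * ((inner ℂ ((g t) (F t)) (F t) : ℂ)).re := by
      have hG2 : G t = (g t) (F t) + (g t) (F t) := by rw [hGdef]; exact two_smul ℝ _
      have h4 := hresym (F t) ((g t) (F t))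
      simp only [Complex.reCLM_apply, Complex.add_re, hG2, inner_add_left, inner_add_right]
      linarith
    rw [h3] at h2
    exact h2
  have hφnorm : ∀ t : ℝ, φ t = ‖F t‖ ^ 2 := by
    intro t
    have := inner_self_eq_norm_sq (𝕜 := ℂ) (F t)
    simpa [hφdef] using this
  have hφ0 : ∀ t : ℝ, 0 ≤ φ t := fun t => by rw [hφnorm t]; positivity
  have hφpos : ∀ s : ℝ, 0 ≤ ((inner ℂ ((g s) (F s)) (F s) : ℂ)).re := by
    intro s
    have := (hg_pos s).inner_nonneg_left (F s)
    exact (Complex.le_def.1 this).1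
  have hφmono : Monotone φ :=
    monotone_of_deriv_nonneg (fun t => (hφ' t).differentiableAt)
      (fun t => by rw [(hφ' t).deriv]; exact mul_nonneg (by norm_num) (hφpos t))
  -- a priori exponential bound on F
  have hF_bd : ∀ t : ℝ, ‖F t‖ ≤ (1 + E) / 2 * Real.exp t := by
    intro t
    have huv : Real.exp (-t) * Real.exp t = 1 := by
      rw [← Real.exp_add]; simp
    have hbint2 : IntegrableOn (fun s : ℝ => Real.exp t * ‖η s‖ ^ 2) (Iic t) volume :=
      hE.integrableOn.const_mul _
    have hbint : IntegrableOn
        (fun s : ℝ => (Real.exp s + Real.exp t * ‖η s‖ ^ 2) / 2) (Iic t) volume :=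
      ((integrableOn_exp_Iic t).add hbint2).div_const 2
    have h1 : ‖F t‖ ≤ ∫ s in Iic t, ‖f s‖ := norm_integral_le_integral_norm _
    have h2 : (∫ s in Iic t, ‖f s‖)
        ≤ ∫ s in Iic t, (Real.exp s + Real.exp t * ‖η s‖ ^ 2) / 2 := by
      refine setIntegral_mono_on (h_int t).norm hbint measurableSet_Iic ?_
      intro s hs
      have hs' : s ≤ t := hs
      have h3 : ‖f s‖ = Real.exp s * ‖η s‖ := by
        simp [hfdef, norm_smul, abs_of_pos (Real.exp_pos s)]
      have h4 : Real.exp s ≤ Real.exp t := Real.exp_le_exp.2 hs'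
      rw [h3]
      nlinarith [mul_nonneg (Real.exp_pos s).le (sq_nonneg (1 - ‖η s‖)),
        mul_nonneg (sub_nonneg.2 h4) (sq_nonneg ‖η s‖)]
    have h5 : (∫ s in Iic t, (Real.exp s + Real.exp t * ‖η s‖ ^ 2) / 2)
        = ((∫ s in Iic t, Real.exp s) + Real.exp t * ∫ s in Iic t, ‖η s‖ ^ 2) / 2 := by
      rw [integral_div, integral_add (integrableOn_exp_Iic t) hbint2, integral_const_mul]
    have h6 : (∫ s in Iic t, Real.exp s) = Real.exp t := integral_exp_Iic t
    have h7 : (∫ s in Iic t, ‖η s‖ ^ 2) ≤ E := by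
      refine setIntegral_le_integral hE (Filter.Eventually.of_forall fun s => by positivity)
    have h8 := h1.trans (h2.trans_eq h5)
    rw [h6] at h8
    nlinarith [Real.exp_pos t]
  -- tail estimate
  obtain ⟨T₀, hT₀⟩ : ∃ T₀ : ℝ, ∀ t ≥ T₀, ‖g t - 1‖ ≤ 1/4 := by
    have h := (hg_lim.eventually_lt_const (show (0:ℝ) < 1/4 by norm_num))
    rcases eventually_atTop.1 h with ⟨T₀, hT⟩
    exact ⟨T₀, fun t ht => (hT t ht).le⟩
  have hkey : ∀ t : ℝ, ‖g t - 1‖ ≤ 1/4 →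
      3 * φ t ≤ 4 * ((inner ℂ ((g t) (F t)) (F t) : ℂ)).re := by
    intro t hgt
    have h1 : |((inner ℂ (F t - (g t) (F t)) (F t) : ℂ)).re| ≤ 1/4 * ‖F t‖^2 := by
      have ha : |((inner ℂ (F t - (g t) (F t)) (F t) : ℂ)).re|
          ≤ ‖(inner ℂ (F t - (g t) (F t)) (F t) : ℂ)‖ := Complex.abs_re_le_norm _
      have hb : ‖(inner ℂ (F t - (g t) (F t)) (F t) : ℂ)‖ ≤ ‖F t - (g t) (F t)‖ * ‖F t‖ :=
        norm_inner_le_norm _ _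
      have hc : ‖F t - (g t) (F t)‖ ≤ 1/4 * ‖F t‖ := by
        have hd : F t - (g t) (F t) = ((1 : H₀ →L[ℂ] H₀) - g t) (F t) := by
          simp [ContinuousLinearMap.sub_apply]
        rw [hd]
        calc ‖((1 : H₀ →L[ℂ] H₀) - g t) (F t)‖ ≤ ‖(1 : H₀ →L[ℂ] H₀) - g t‖ * ‖F t‖ :=
              ContinuousLinearMap.le_opNorm _ _
          _ ≤ 1/4 * ‖F t‖ := by
              have : ‖(1 : H₀ →L[ℂ] H₀) - g t‖ = ‖g t - 1‖ := norm_sub_rev _ _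
              rw [this]
              exact mul_le_mul_of_nonneg_right hgt (norm_nonneg _)
      calc |((inner ℂ (F t - (g t) (F t)) (F t) : ℂ)).re| ≤ ‖F t - (g t) (F t)‖ * ‖F t‖ :=
            ha.trans hb
        _ ≤ (1/4 * ‖F t‖) * ‖F t‖ := mul_le_mul_of_nonneg_right hc (norm_nonneg _)
        _ = 1/4 * ‖F t‖^2 := by ring
    have h2 : ((inner ℂ (F t - (g t) (F t)) (F t) : ℂ)).re
        = φ t - ((inner ℂ ((g t) (F t)) (F t) : ℂ)).re := by
      rw [inner_sub_left]
      simp [hφdef]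
    rw [h2] at h1
    have h3 := abs_le.1 h1
    have h4 := hφnorm t
    have h5 := h3.1
    linarith
  -- the decreasing-exponential comparison function
  set ψ : ℝ → ℝ := fun t => Real.exp (-3 * t) * φ t with hψdef
  have hψ' : ∀ t : ℝ, HasDerivAt ψ
      (Real.exp (-3*t) * (-3) * φ t
        + Real.exp (-3*t) * (4 * ((inner ℂ ((g t) (F t)) (F t) : ℂ)).re)) t := by
    intro t
    have h0 : HasDerivAt (fun u : ℝ => -3*u) (-3) t := by
      simpa using (hasDerivAt_id t).const_mul (-3 : ℝ)
    have he : HasDerivAt (fun u : ℝ => Real.exp (-3*u)) (Real.exp (-3*t) * (-3)) t := h0.exp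
    exact he.mul (hφ' t)
  have hφcont : Continuous φ := by
    have : Differentiable ℝ φ := fun t => (hφ' t).differentiableAt
    exact this.continuous
  have hψmono : MonotoneOn ψ (Ici T₀) := by
    refine monotoneOn_of_deriv_nonneg (convex_Ici T₀) ?_ ?_ ?_
    · exact ((Real.continuous_exp.comp (continuous_const.mul continuous_id)).mul
        hφcont).continuousOn
    · intro x hx
      exact ((hψ' x).differentiableAt).differentiableWithinAt
    · intro x hx
      rw [interior_Ici] at hx
      rw [(hψ' x).deriv]
      have hk := hkey x (hT₀ x (le_of_lt hx))
      nlinarith [Real.exp_pos (-3*x)]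
  have hψle : ∀ u : ℝ, ψ u ≤ ((1+E)/2)^2 * Real.exp (-u) := by
    intro u
    have hb := hF_bd u
    have h9 : φ u ≤ ((1+E)/2)^2 * Real.exp u ^ 2 := by
      rw [hφnorm u]
      calc ‖F u‖^2 ≤ ((1+E)/2 * Real.exp u)^2 :=
            pow_le_pow_left₀ (norm_nonneg _) hb 2
        _ = ((1+E)/2)^2 * Real.exp u ^2 := by ring
    calc ψ u = Real.exp (-3*u) * φ u := rfl
      _ ≤ Real.exp (-3*u) * (((1+E)/2)^2 * Real.exp u ^2) :=
          mul_le_mul_of_nonneg_left h9 (Real.exp_pos _).le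
      _ = ((1+E)/2)^2 * (Real.exp (-3*u) * (Real.exp u * Real.exp u)) := by ring
      _ = ((1+E)/2)^2 * Real.exp (-u) := by
          rw [← Real.exp_add, ← Real.exp_add]; ring_nf
  have hφtail : ∀ t : ℝ, T₀ ≤ t → φ t = 0 := by
    intro t ht
    have hψt : ψ t ≤ 0 := by
      have hlim : Tendsto (fun u => ((1+E)/2)^2 * Real.exp (-u)) atTop (𝓝 0) := by
        simpa using (Real.tendsto_exp_neg_atTop_nhds_zero.const_mul (((1+E)/2)^2))
      refine ge_of_tendsto hlim ?_
      filter_upwards [eventually_ge_atTop t] with u hu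
      exact (hψmono ht (le_trans ht hu) hu).trans (hψle u)
    have hexp := Real.exp_pos (-3*t)
    have hψeq : ψ t = Real.exp (-3*t) * φ t := rfl
    rw [hψeq] at hψt
    have h0 := hφ0 t
    have : φ t ≤ 0 := by
      by_contra hcon
      push_neg at hcon
      nlinarith
    exact le_antisymm this h0
  have hφall : ∀ t : ℝ, φ t = 0 := by
    intro t
    rcases le_total t T₀ with h|h
    · exact le_antisymm ((hφmono h).trans_eq (hφtail T₀ le_rfl)) (hφ0 t)
    · exact hφtail t h
  have hF0 : ∀ t : ℝ, F t = 0 := by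
    intro t
    have h : ‖F t‖ ^ 2 = 0 := by rw [← hφnorm t]; exact hφall t
    have := (pow_eq_zero_iff (by norm_num : (2:ℕ) ≠ 0)).1 h
    simpa using this
  have hzero : (fun s : ℝ => η s) =ᵐ[volume] (0 : ℝ → H₀) := by
    filter_upwards [hη] with s hs
    rw [hs, hconv s, hF0 s, smul_zero, map_zero, smul_zero]
    rfl
  exact Lp.ext (hzero.trans (Lp.coeFn_zero H₀ 2 volume).symm)
end

section
/- Let V be a finite-dimensional real normed vector space and D a linear endomorphism of V, with the flow α_D on the one-point compactification V̄ = V ∪ {∞} given by α_D(v,t) = exp(tD)v and α_D(∞,t) = ∞. If the flow α_D has a nontrivial attractor-repeller pair, then D has no nonzero purely imaginary eigenvalue; explicitly, there exist no τ ∈ ℝ∖{0} and vectors v₁, v₂ ∈ V, not both zero, with D v₁ = −τ v₂ and D v₂ = τ v₁. -/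
open Filter Topology Set

/-- The ω-limit set `ω(S) = ⋂_{t∈ℝ} Cl(S·[t,∞))` of a set `S` under a right
ℝ-action `act`. -/
def omegaSet {X : Type*} [TopologicalSpace X] (act : X → ℝ → X) (S : Set X) : Set X :=
  ⋂ t : ℝ, closure {x | ∃ y ∈ S, ∃ s : ℝ, t ≤ s ∧ act y s = x}

/-- The ω*-limit set `ω*(S) = ⋂_{t∈ℝ} Cl(S·(−∞,t])`. -/
def omegaStarSet {X : Type*} [TopologicalSpace X] (act : X → ℝ → X) (S : Set X) : Set X :=
  ⋂ t : ℝ, closure {x | ∃ y ∈ S, ∃ s : ℝ, s ≤ t ∧ act y s = x}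

/-- `A` is an attractor for `act` if it has a neighborhood `N` with `ω(N) = A`. -/
def IsAttractorFor {X : Type*} [TopologicalSpace X] (act : X → ℝ → X) (A : Set X) : Prop :=
  ∃ N : Set X, A ⊆ interior N ∧ omegaSet act N = A

/-- The complementary repeller `A* = {x : ω(x) ∩ A = ∅}` of an attractor `A`. -/
def compRepeller {X : Type*} [TopologicalSpace X] (act : X → ℝ → X) (A : Set X) : Set X :=
  {x | omegaSet act {x} ∩ A = ∅}

/-- The flow `α_D(v,t) = exp(tD)v`, `α_D(∞,t) = ∞`, on the one-point
compactification `V̄ = V ∪ {∞}`. -/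
noncomputable def expFlow {V : Type*} [NormedAddCommGroup V] [NormedSpace ℝ V]
    (D : V →L[ℝ] V) (x : OnePoint V) (t : ℝ) : OnePoint V :=
  OnePoint.map (fun v => NormedSpace.exp (t • D) v) x

namespace Stmt10Aux

open scoped OnePoint

/-! ### Generic lemmas about ω-limit sets -/

section Generic

variable {X : Type*} [TopologicalSpace X] (act : X → ℝ → X)

lemma mem_omegaSet {S : Set X} {x : X} :
    x ∈ omegaSet act S ↔
      ∀ t : ℝ, x ∈ closure {z | ∃ y ∈ S, ∃ s : ℝ, t ≤ s ∧ act y s = z} :=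
  Set.mem_iInter

lemma mem_omegaStarSet {S : Set X} {x : X} :
    x ∈ omegaStarSet act S ↔
      ∀ t : ℝ, x ∈ closure {z | ∃ y ∈ S, ∃ s : ℝ, s ≤ t ∧ act y s = z} :=
  Set.mem_iInter

lemma omegaSet_mono {S S' : Set X} (h : S ⊆ S') : omegaSet act S ⊆ omegaSet act S' := by
  refine Set.iInter_mono fun t => closure_mono ?_
  rintro z ⟨y, hy, s, hs, he⟩
  exact ⟨y, h hy, s, hs, he⟩

lemma isClosed_omegaSet (S : Set X) : IsClosed (omegaSet act S) :=
  isClosed_iInter fun _ => isClosed_closure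

lemma omegaSet_nonempty [CompactSpace X] {S : Set X} (hS : S.Nonempty) :
    (omegaSet act S).Nonempty := by
  obtain ⟨y, hy⟩ := hS
  refine IsCompact.nonempty_iInter_of_directed_nonempty_isCompact_isClosed _ ?_ ?_ ?_ ?_
  · intro a b
    refine ⟨max a b, closure_mono ?_, closure_mono ?_⟩
    · rintro z ⟨y', hy', s, hs, he⟩
      exact ⟨y', hy', s, (le_max_left a b).trans hs, he⟩
    · rintro z ⟨y', hy', s, hs, he⟩
      exact ⟨y', hy', s, (le_max_right a b).trans hs, he⟩
  · intro t
    exact ⟨act y t, subset_closure ⟨y, hy, t, le_refl t, rfl⟩⟩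
  · intro t
    exact isClosed_closure.isCompact
  · intro t
    exact isClosed_closure

lemma omegaStarSet_nonempty [CompactSpace X] {S : Set X} (hS : S.Nonempty) :
    (omegaStarSet act S).Nonempty := by
  obtain ⟨y, hy⟩ := hS
  refine IsCompact.nonempty_iInter_of_directed_nonempty_isCompact_isClosed _ ?_ ?_ ?_ ?_
  · intro a b
    refine ⟨min a b, closure_mono ?_, closure_mono ?_⟩
    · rintro z ⟨y', hy', s, hs, he⟩
      exact ⟨y', hy', s, hs.trans (min_le_left a b), he⟩
    · rintro z ⟨y', hy', s, hs, he⟩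
      exact ⟨y', hy', s, hs.trans (min_le_right a b), he⟩
  · intro t
    exact ⟨act y t, subset_closure ⟨y, hy, t, le_refl t, rfl⟩⟩
  · intro t
    exact isClosed_closure.isCompact
  · intro t
    exact isClosed_closure

lemma image_omegaSet_subset {g : X → X} (hg : Continuous g)
    (hcomm : ∀ y s, g (act y s) = act (g y) s) (S : Set X) :
    g '' omegaSet act S ⊆ omegaSet act (g '' S) := by
  rintro _ ⟨a, ha, rfl⟩
  rw [mem_omegaSet] at ha ⊢
  intro t
  have h1 : g a ∈ g '' closure {z | ∃ y ∈ S, ∃ s : ℝ, t ≤ s ∧ act y s = z} := ⟨a, ha t, rfl⟩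
  have h2 := image_closure_subset_closure_image hg h1
  refine closure_mono ?_ h2
  rintro _ ⟨z, ⟨y, hy, s, hs, rfl⟩, rfl⟩
  exact ⟨g y, ⟨y, hy, rfl⟩, s, hs, (hcomm y s).symm⟩

lemma image_omegaStarSet_subset {g : X → X} (hg : Continuous g)
    (hcomm : ∀ y s, g (act y s) = act (g y) s) (S : Set X) :
    g '' omegaStarSet act S ⊆ omegaStarSet act (g '' S) := by
  rintro _ ⟨a, ha, rfl⟩
  rw [mem_omegaStarSet] at ha ⊢
  intro t
  have h1 : g a ∈ g '' closure {z | ∃ y ∈ S, ∃ s : ℝ, s ≤ t ∧ act y s = z} := ⟨a, ha t, rfl⟩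
  have h2 := image_closure_subset_closure_image hg h1
  refine closure_mono ?_ h2
  rintro _ ⟨z, ⟨y, hy, s, hs, rfl⟩, rfl⟩
  exact ⟨g y, ⟨y, hy, rfl⟩, s, hs, (hcomm y s).symm⟩

end Generic

/-! ### Lemmas about the flow `expFlow` -/

section Flow

variable {V : Type*} [NormedAddCommGroup V] [NormedSpace ℝ V] [FiniteDimensional ℝ V]
  (D : V →L[ℝ] V)

lemma exp_smul_add (s t : ℝ) :
    NormedSpace.exp ((s + t) • D) = NormedSpace.exp (s • D) * NormedSpace.exp (t • D) := by
  rw [add_smul]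
  refine NormedSpace.exp_add_of_commute_of_mem_ball (𝕂 := ℝ) ?_
    ((NormedSpace.expSeries_radius_eq_top ℝ (V →L[ℝ] V)).symm ▸ edist_lt_top _ _)
    ((NormedSpace.expSeries_radius_eq_top ℝ (V →L[ℝ] V)).symm ▸ edist_lt_top _ _)
  unfold Commute SemiconjBy
  rw [Algebra.smul_mul_assoc, Algebra.smul_mul_assoc, Algebra.mul_smul_comm,
    Algebra.mul_smul_comm, smul_comm s t]

@[simp] lemma expFlow_infty (t : ℝ) : expFlow D ∞ t = ∞ := rfl

@[simp] lemma expFlow_coe (v : V) (t : ℝ) :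
    expFlow D (v : OnePoint V) t = ((NormedSpace.exp (t • D) v : V) : OnePoint V) := rfl

lemma expFlow_expFlow (x : OnePoint V) (s t : ℝ) :
    expFlow D (expFlow D x s) t = expFlow D x (t + s) := by
  induction x with
  | infty => rfl
  | coe v =>
    rw [expFlow_coe, expFlow_coe, expFlow_coe, exp_smul_add, ContinuousLinearMap.mul_apply]

lemma expFlow_zero (x : OnePoint V) : expFlow D x 0 = x := by
  induction x with
  | infty => rfl
  | coe v =>
    rw [expFlow_coe, zero_smul, NormedSpace.exp_zero, ContinuousLinearMap.one_apply]

lemma exp_smul_neg_apply (t : ℝ) (v : V) :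
    NormedSpace.exp ((-t) • D) (NormedSpace.exp (t • D) v) = v := by
  rw [← ContinuousLinearMap.mul_apply, ← exp_smul_add, neg_add_cancel, zero_smul,
    NormedSpace.exp_zero, ContinuousLinearMap.one_apply]

/-- The time-`t` map of the flow, as a homeomorphism of `OnePoint V`. -/
noncomputable def flowHomeo (t : ℝ) : OnePoint V ≃ₜ OnePoint V :=
  (Homeomorph.mk
    ⟨fun v => NormedSpace.exp (t • D) v, fun v => NormedSpace.exp ((-t) • D) v,
      exp_smul_neg_apply D t, fun v => by
        have := exp_smul_neg_apply D (-t) v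
        rwa [neg_neg] at this⟩
    (NormedSpace.exp (t • D)).continuous
    (NormedSpace.exp ((-t) • D)).continuous).onePointCongr

lemma continuous_expFlow (t : ℝ) : Continuous (fun x : OnePoint V => expFlow D x t) :=
  (flowHomeo D t).continuous

/-- Scalar multiplication on `OnePoint V`. -/
def sm (c : ℝ) : OnePoint V → OnePoint V := OnePoint.map (fun v : V => c • v)

@[simp] lemma sm_infty (c : ℝ) : sm (V := V) c ∞ = ∞ := rfl

@[simp] lemma sm_coe (c : ℝ) (v : V) : sm c (v : OnePoint V) = ((c • v : V) : OnePoint V) := rfl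

lemma sm_sm (c d : ℝ) (x : OnePoint V) : sm c (sm d x) = sm (c * d) x := by
  induction x with
  | infty => rfl
  | coe v => rw [sm_coe, sm_coe, sm_coe, smul_smul]

lemma sm_one (x : OnePoint V) : sm (V := V) 1 x = x := by
  induction x with
  | infty => rfl
  | coe v => rw [sm_coe, one_smul]

/-- Scalar multiplication by `c ≠ 0`, as a homeomorphism of `OnePoint V`. -/
noncomputable def smHomeo (c : ℝ) (hc : c ≠ 0) : OnePoint V ≃ₜ OnePoint V :=
  (Homeomorph.mk
    ⟨fun v : V => c • v, fun v : V => c⁻¹ • v,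
      fun v => by
        show c⁻¹ • c • v = v
        rw [smul_smul, inv_mul_cancel₀ hc, one_smul],
      fun v => by
        show c • c⁻¹ • v = v
        rw [smul_smul, mul_inv_cancel₀ hc, one_smul]⟩
    (continuous_const_smul c) (continuous_const_smul c⁻¹)).onePointCongr

lemma continuous_sm {c : ℝ} (hc : c ≠ 0) : Continuous (sm (V := V) c) :=
  (smHomeo (V := V) c hc).continuous

lemma sm_expFlow (c : ℝ) (x : OnePoint V) (t : ℝ) :
    sm c (expFlow D x t) = expFlow D (sm c x) t := by
  induction x with
  | infty => rfl
  | coe v => rw [expFlow_coe, sm_coe, sm_coe, expFlow_coe, map_smul]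

lemma omegaSet_singleton_act (x : OnePoint V) (u : ℝ) :
    omegaSet (expFlow D) {x} ⊆ omegaSet (expFlow D) {expFlow D x u} := by
  intro a ha
  rw [mem_omegaSet] at ha ⊢
  intro t
  refine closure_mono ?_ (ha (t + u))
  rintro z ⟨y, rfl, s, hs, rfl⟩
  refine ⟨expFlow D y u, rfl, s - u, by linarith, ?_⟩
  rw [expFlow_expFlow, sub_add_cancel]

lemma omegaSet_actImage_subset (N : Set (OnePoint V)) (u : ℝ) :
    omegaSet (expFlow D) ((fun z => expFlow D z u) '' N) ⊆ omegaSet (expFlow D) N := by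
  intro a ha
  rw [mem_omegaSet] at ha ⊢
  intro t
  refine closure_mono ?_ (ha (t - u))
  rintro z ⟨_, ⟨y, hy, rfl⟩, s, hs, rfl⟩
  exact ⟨y, hy, s + u, by linarith, (expFlow_expFlow D y u s).symm⟩

lemma omegaStarSet_singleton_act (x : OnePoint V) (u : ℝ) :
    omegaStarSet (expFlow D) {expFlow D x u} ⊆ omegaStarSet (expFlow D) {x} := by
  intro p hp
  rw [mem_omegaStarSet] at hp ⊢
  intro t
  refine closure_mono ?_ (hp (t - u))
  rintro z ⟨y, rfl, s, hs, rfl⟩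
  exact ⟨x, rfl, s + u, by linarith, (expFlow_expFlow D x u s).symm⟩

lemma mem_omegaSet_of_returns {x : OnePoint V}
    (h : ∀ t : ℝ, ∃ s : ℝ, t ≤ s ∧ expFlow D x s = x) {S : Set (OnePoint V)} (hx : x ∈ S) :
    x ∈ omegaSet (expFlow D) S := by
  rw [mem_omegaSet]
  intro t
  obtain ⟨s, hs, he⟩ := h t
  exact subset_closure ⟨x, hx, s, hs, he⟩

/-! ### Existence of a positive period on the eigenplane -/

lemma exists_pos_period {τ : ℝ} {v₁ v₂ : V} (hτ : τ ≠ 0)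
    (h1 : D v₁ = (-τ) • v₂) (h2 : D v₂ = τ • v₁) :
    ∃ T : ℝ, 0 < T ∧ NormedSpace.exp (T • D) v₁ = v₁ := by
  set c : ℝ → V := fun t => Real.cos (τ * t) • v₁ - Real.sin (τ * t) • v₂ with hc_def
  have hinner : ∀ t : ℝ, HasDerivAt (fun t : ℝ => τ * t) τ t := by
    intro t
    simpa using (hasDerivAt_id t).const_mul τ
  have hcos : ∀ t : ℝ, HasDerivAt (fun t : ℝ => Real.cos (τ * t)) (-Real.sin (τ * t) * τ) t := by
    intro t
    have h := (Real.hasDerivAt_cos (τ * t)).comp t (hinner t)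
    exact h
  have hsin : ∀ t : ℝ, HasDerivAt (fun t : ℝ => Real.sin (τ * t)) (Real.cos (τ * t) * τ) t := by
    intro t
    have h := (Real.hasDerivAt_sin (τ * t)).comp t (hinner t)
    exact h
  have hc : ∀ t : ℝ, HasDerivAt c
      ((-Real.sin (τ * t) * τ) • v₁ - (Real.cos (τ * t) * τ) • v₂) t := by
    intro t
    exact ((hcos t).smul_const v₁).sub ((hsin t).smul_const v₂)
  have hDc : ∀ t : ℝ, D (c t) = (-Real.sin (τ * t) * τ) • v₁ - (Real.cos (τ * t) * τ) • v₂ := by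
    intro t
    simp only [hc_def, map_sub, map_smul, h1, h2, smul_smul]
    module
  have hF : ∀ t : ℝ, HasDerivAt (fun t : ℝ => NormedSpace.exp ((-t) • D))
      ((-1 : ℝ) • (NormedSpace.exp ((-t) • D) * D)) t := by
    intro t
    have h := (hasDerivAt_exp_smul_const (𝕂 := ℝ) D (-t)).scomp t (hasDerivAt_neg t)
    simpa [Function.comp_def] using h
  set w : ℝ → V := fun t => NormedSpace.exp ((-t) • D) (c t) with hw_def
  have hw : ∀ t : ℝ, HasDerivAt w 0 t := by
    intro t
    have h := (hF t).clm_apply (hc t)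
    have hz : ((-1 : ℝ) • (NormedSpace.exp ((-t) • D) * D)) (c t) +
        NormedSpace.exp ((-t) • D)
          ((-Real.sin (τ * t) * τ) • v₁ - (Real.cos (τ * t) * τ) • v₂) = 0 := by
      rw [← hDc t]
      simp [ContinuousLinearMap.smul_apply, ContinuousLinearMap.mul_apply]
    rwa [hz] at h
  have hdiff : Differentiable ℝ w := fun t => (hw t).differentiableAt
  have hconst := is_const_of_deriv_eq_zero hdiff (fun t => (hw t).deriv) (2 * Real.pi / τ) 0
  have hw0 : w 0 = v₁ := by
    simp [hw_def, hc_def, NormedSpace.exp_zero]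
  have hτT : τ * (2 * Real.pi / τ) = 2 * Real.pi := by
    field_simp
  have hwT : w (2 * Real.pi / τ) = NormedSpace.exp ((-(2 * Real.pi / τ)) • D) v₁ := by
    simp [hw_def, hc_def, hτT, Real.cos_two_pi, Real.sin_two_pi]
  have hfixneg : NormedSpace.exp ((-(2 * Real.pi / τ)) • D) v₁ = v₁ := by
    rw [← hwT, hconst, hw0]
  have hfixpos : NormedSpace.exp ((2 * Real.pi / τ) • D) v₁ = v₁ := by
    conv_lhs => rw [← hfixneg]
    rw [← ContinuousLinearMap.mul_apply, ← exp_smul_add, add_neg_cancel, zero_smul,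
      NormedSpace.exp_zero, ContinuousLinearMap.one_apply]
  rcases lt_or_gt_of_ne hτ with hneg | hpos
  · refine ⟨-(2 * Real.pi / τ), ?_, hfixneg⟩
    have : 2 * Real.pi / τ < 0 := div_neg_of_pos_of_neg (by positivity) hneg
    linarith
  · exact ⟨2 * Real.pi / τ, by positivity, hfixpos⟩

lemma exp_nat_period {T : ℝ} {v₁ : V} (hfix : NormedSpace.exp (T • D) v₁ = v₁) :
    ∀ n : ℕ, NormedSpace.exp (((n : ℝ) * T) • D) v₁ = v₁ := by
  intro n
  induction n with
  | zero => simp [NormedSpace.exp_zero]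
  | succ n ih =>
    have h : ((n + 1 : ℕ) : ℝ) * T = (n : ℝ) * T + T := by push_cast; ring
    rw [h, exp_smul_add, ContinuousLinearMap.mul_apply, hfix, ih]

/-! ### Scale invariance of attractors -/

lemma scale_invariant {A N : Set (OnePoint V)} (hAN : A ⊆ interior N)
    (hωN : omegaSet (expFlow D) N = A) :
    ∀ c : ℝ, 0 < c → ∀ a ∈ A, sm c a ∈ A := by
  classical
  have hA_closed : IsClosed A := hωN ▸ isClosed_omegaSet _ _
  have hA_comp : IsCompact A := hA_closed.isCompact
  rcases A.eq_empty_or_nonempty with rfl | hA_ne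
  · intro c _ a ha
    exact absurd ha (notMem_empty a)
  have cover : ∀ a ∈ A, ∃ ε : ℝ, 0 < ε ∧ ∃ U : Set (OnePoint V), IsOpen U ∧ a ∈ U ∧
      ∀ l : ℝ, |l| < ε → ∀ x ∈ U, sm (Real.exp l) x ∈ interior N := by
    intro a ha
    induction a with
    | infty =>
      have hmem : interior N ∈ 𝓝 (∞ : OnePoint V) := isOpen_interior.mem_nhds (hAN ha)
      obtain ⟨K, ⟨hKcl, hKcp⟩, hKsub⟩ := (OnePoint.hasBasis_nhds_infty).mem_iff.1 hmem
      obtain ⟨R, hR0, hRK⟩ := hKcp.isBounded.subset_closedBall_lt 0 0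
      refine ⟨Real.log 2, Real.log_pos (by norm_num),
        ((↑) '' Metric.closedBall (0 : V) (2 * R + 2))ᶜ,
        OnePoint.isOpen_compl_image_coe.2 ⟨Metric.isClosed_closedBall,
          isCompact_closedBall _ _⟩,
        fun h => OnePoint.infty_notMem_image_coe h, ?_⟩
      intro l hl x hx
      induction x with
      | infty => exact hKsub (Or.inr rfl)
      | coe v =>
        have hv : ¬ (2 * R + 2 ≥ ‖v‖) := by
          intro hge
          exact hx ⟨v, by simpa [Metric.mem_closedBall, dist_zero_right] using hge, rfl⟩
        push_neg at hv
        have hexp : (2 : ℝ)⁻¹ < Real.exp l := by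
          have h1 : -Real.log 2 < l := by
            have := abs_lt.1 hl
            linarith [this.1]
          calc (2 : ℝ)⁻¹ = Real.exp (-Real.log 2) := by
                rw [Real.exp_neg, Real.exp_log (by norm_num)]
            _ < Real.exp l := Real.exp_lt_exp.2 h1
        rw [sm_coe]
        refine hKsub (Or.inl ⟨Real.exp l • v, ?_, rfl⟩)
        intro hK
        have hnorm : ‖Real.exp l • v‖ ≤ R := by
          have := hRK hK
          simpa [Metric.mem_closedBall, dist_zero_right] using this
        have : R < ‖Real.exp l • v‖ := by
          rw [norm_smul, Real.norm_eq_abs, abs_of_pos (Real.exp_pos l)]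
          calc R < 2⁻¹ * (2 * R + 2) := by linarith
            _ ≤ Real.exp l * ‖v‖ := by
                apply mul_le_mul hexp.le hv.le (by linarith) (le_of_lt (Real.exp_pos l))
        linarith
    | coe w =>
      have haN : ((w : OnePoint V)) ∈ interior N := hAN ha
      have hWopen : IsOpen (((↑) : V → OnePoint V) ⁻¹' interior N) :=
        isOpen_interior.preimage OnePoint.continuous_coe
      have hg : Continuous (fun p : ℝ × V => Real.exp p.1 • p.2) :=
        (Real.continuous_exp.comp continuous_fst).smul continuous_snd
      have hp0 : ((0 : ℝ), w) ∈
          (fun p : ℝ × V => Real.exp p.1 • p.2) ⁻¹' (((↑) : V → OnePoint V) ⁻¹' interior N) := by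
        simp only [Set.mem_preimage, Real.exp_zero, one_smul]
        exact haN
      obtain ⟨δ, hδ0, hδ⟩ := Metric.isOpen_iff.1 (hWopen.preimage hg) _ hp0
      refine ⟨δ, hδ0, ((↑) : V → OnePoint V) '' Metric.ball w δ,
        OnePoint.isOpenMap_coe _ Metric.isOpen_ball,
        ⟨w, Metric.mem_ball_self hδ0, rfl⟩, ?_⟩
      rintro l hl x ⟨v, hv, rfl⟩
      have hmem : (l, v) ∈ Metric.ball ((0 : ℝ), w) δ := by
        rw [Metric.mem_ball, Prod.dist_eq, max_lt_iff]
        exact ⟨by simpa [Real.dist_eq] using hl, hv⟩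
      have := hδ hmem
      rw [sm_coe]
      exact this
  choose! ε hε U hUo hUm hUp using cover
  have hcov : A ⊆ ⋃ i : A, U i := fun a ha => Set.mem_iUnion.2 ⟨⟨a, ha⟩, hUm a ha⟩
  obtain ⟨t, ht⟩ := hA_comp.elim_finite_subcover (fun i : A => U i) (fun i => hUo i i.2) hcov
  obtain ⟨a₀, ha₀⟩ := hA_ne
  have htne : t.Nonempty := by
    obtain ⟨i, hi, _⟩ := Set.mem_iUnion₂.1 (ht ha₀)
    exact ⟨i, hi⟩
  set ε₀ := t.inf' htne (fun i => ε i) with hε₀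
  have hε₀pos : 0 < ε₀ := (Finset.lt_inf'_iff htne).2 fun i hi => hε i i.2
  have step4 : ∀ l : ℝ, |l| < ε₀ → ∀ a ∈ A, sm (Real.exp l) a ∈ interior N := by
    intro l hl a ha
    obtain ⟨i, hi, hai⟩ := Set.mem_iUnion₂.1 (ht ha)
    exact hUp i i.2 l (lt_of_lt_of_le hl (Finset.inf'_le _ hi)) a hai
  have hinv : ∀ u : ℝ, ∀ a ∈ A, expFlow D a u ∈ A := by
    intro u a ha
    have h1 : expFlow D a u ∈ (fun z => expFlow D z u) '' omegaSet (expFlow D) N :=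
      ⟨a, by rw [hωN]; exact ha, rfl⟩
    have h2 := image_omegaSet_subset (expFlow D) (continuous_expFlow D u)
      (fun y s => by rw [expFlow_expFlow, expFlow_expFlow, add_comm]) N h1
    have h3 := omegaSet_actImage_subset D N u h2
    rwa [hωN] at h3
  have hAsub : A ⊆ omegaSet (expFlow D) A := by
    intro a ha
    rw [mem_omegaSet]
    intro s
    refine subset_closure ⟨expFlow D a (-s), hinv (-s) a ha, s, le_refl s, ?_⟩
    rw [expFlow_expFlow, add_neg_cancel, expFlow_zero]
  have key : ∀ l : ℝ, |l| < ε₀ → ∀ a ∈ A, sm (Real.exp l) a ∈ A := by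
    intro l hl a ha
    have h1 : sm (Real.exp l) a ∈ sm (Real.exp l) '' omegaSet (expFlow D) A :=
      ⟨a, hAsub ha, rfl⟩
    have h2 := image_omegaSet_subset (expFlow D) (continuous_sm (V := V) (Real.exp_ne_zero l))
      (fun y s => sm_expFlow D _ y s) A h1
    have h3 : sm (Real.exp l) '' A ⊆ N := by
      rintro _ ⟨b, hb, rfl⟩
      exact interior_subset (step4 l hl b hb)
    have h4 := omegaSet_mono (expFlow D) h3 h2
    rwa [hωN] at h4
  have nsmall : ∀ (n : ℕ) (l : ℝ), |l| < ε₀ → ∀ a ∈ A, sm (Real.exp ((n : ℝ) * l)) a ∈ A := by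
    intro n
    induction n with
    | zero =>
      intro l _ a ha
      have h : ((0 : ℕ) : ℝ) * l = 0 := by push_cast; ring
      rw [h, Real.exp_zero, sm_one]
      exact ha
    | succ n ih =>
      intro l hl a ha
      have h : ((n + 1 : ℕ) : ℝ) * l = (n : ℝ) * l + l := by push_cast; ring
      rw [h, Real.exp_add, ← sm_sm]
      exact ih l hl _ (key l hl a ha)
  have alll : ∀ l : ℝ, ∀ a ∈ A, sm (Real.exp l) a ∈ A := by
    intro l a ha
    obtain ⟨n, hn⟩ := exists_nat_gt (|l| / ε₀)
    have hn0 : (0 : ℝ) < n := lt_of_le_of_lt (div_nonneg (abs_nonneg l) hε₀pos.le) hn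
    have hsmall : |l / n| < ε₀ := by
      rw [abs_div, abs_of_pos hn0, div_lt_iff₀ hn0]
      have := (div_lt_iff₀ hε₀pos).1 hn
      linarith [this, mul_comm ε₀ (n : ℝ)]
    have h := nsmall n (l / n) hsmall a ha
    have hmul : (n : ℝ) * (l / n) = l := by field_simp
    rwa [hmul] at h
  intro c hc a ha
  have h := alll (Real.log c) a ha
  rwa [Real.exp_log hc] at h

end Flow

end Stmt10Aux

open Stmt10Aux OnePoint in
/-- if the flow `α_D` on the one-point compactification of a
finite-dimensional real normed space `V` has a nontrivial attractor-repeller pair,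
then `D` has no nonzero purely imaginary eigenvalue. -/
theorem stmt_10 {V : Type*} [NormedAddCommGroup V] [NormedSpace ℝ V]
    [FiniteDimensional ℝ V] (D : V →L[ℝ] V)
    (hpair : ∃ A : Set (OnePoint V), IsAttractorFor (expFlow D) A ∧
      A ∪ compRepeller (expFlow D) A ≠ Set.univ) :
    ¬∃ (τ : ℝ) (v₁ v₂ : V), τ ≠ 0 ∧ (v₁ ≠ 0 ∨ v₂ ≠ 0) ∧
      D v₁ = (-τ) • v₂ ∧ D v₂ = τ • v₁ := by
  classical
  rintro ⟨τ, v₁, v₂, hτ, hv, h1, h2⟩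
  obtain ⟨A, ⟨N, hAN, hωN⟩, hne⟩ := hpair
  -- `v₁ ≠ 0`
  have hv₁ : v₁ ≠ 0 := by
    rintro rfl
    have h0 : (0 : V) = (-τ) • v₂ := by rw [← h1, map_zero]
    rcases smul_eq_zero.1 h0.symm with h | h
    · exact hτ (neg_eq_zero.1 h)
    · subst h
      rcases hv with h | h <;> exact h rfl
  -- positive period for `v₁`
  obtain ⟨T, hT, hfixT⟩ := exists_pos_period D hτ h1 h2
  have hret : ∀ μ : ℝ, ∀ t : ℝ, ∃ s : ℝ, t ≤ s ∧
      expFlow D ((μ • v₁ : V) : OnePoint V) s = ((μ • v₁ : V) : OnePoint V) := by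
    intro μ t
    obtain ⟨n, hn⟩ := exists_nat_ge (t / T)
    refine ⟨(n : ℝ) * T, ?_, ?_⟩
    · have := (div_le_iff₀ hT).1 hn
      linarith
    · rw [expFlow_coe, _root_.map_smul, exp_nat_period D hfixT n]
  have hA_closed : IsClosed A := hωN ▸ isClosed_omegaSet _ _
  -- a point outside `A ∪ A*`
  obtain ⟨x₀, hx₀⟩ : ∃ x, x ∉ A ∪ compRepeller (expFlow D) A := by
    by_contra h
    push_neg at h
    exact hne (Set.eq_univ_of_forall h)
  have hx₀A : x₀ ∉ A := fun h => hx₀ (Set.mem_union_left _ h)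
  have hx₀R : x₀ ∉ compRepeller (expFlow D) A := fun h => hx₀ (Set.mem_union_right _ h)
  have hx₀ω : (omegaSet (expFlow D) {x₀} ∩ A).Nonempty :=
    Set.nonempty_iff_ne_empty.2 hx₀R
  have hA_ne : A.Nonempty := by
    obtain ⟨a, _, haA⟩ := hx₀ω
    exact ⟨a, haA⟩
  have hscale := scale_invariant D hAN hωN
  -- membership of line points in `A`, provided they are in `interior N`
  have hline_mem : ∀ μ : ℝ, ((μ • v₁ : V) : OnePoint V) ∈ interior N →
      ((μ • v₁ : V) : OnePoint V) ∈ A := by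
    intro μ hμ
    rw [← hωN]
    exact mem_omegaSet_of_returns D (hret μ) (interior_subset hμ)
  have hinfty_mem : (∞ : OnePoint V) ∈ interior N → (∞ : OnePoint V) ∈ A := by
    intro h
    rw [← hωN]
    exact mem_omegaSet_of_returns D (fun t => ⟨t, le_refl t, rfl⟩) (interior_subset h)
  -- the invariant "line" through `v₁`, together with `0` and `∞`
  set line : Set V := Set.range (fun μ : ℝ => μ • v₁) with hline_def
  set L : Set (OnePoint V) := (((↑) : V → OnePoint V) '' line) ∪ {∞} with hL_def
  have hL_elem : ∀ x ∈ L, x ∈ interior N → x ∈ A := by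
    rintro x (⟨v, ⟨μ, rfl⟩, rfl⟩ | hx) h
    · exact hline_mem μ h
    · obtain rfl : x = ∞ := hx
      exact hinfty_mem h
  have hlineclosed : IsClosed line := by
    have : line = ((Submodule.span ℝ {v₁} : Submodule ℝ V) : Set V) := by
      ext x
      simp only [hline_def, Set.mem_range, SetLike.mem_coe, Submodule.mem_span_singleton]
    rw [this]
    exact Submodule.closed_of_finiteDimensional _
  have hLclosed : IsClosed L := by
    have h : ((((↑) : V → OnePoint V) '' lineᶜ))ᶜ = L := by
      rw [OnePoint.compl_image_coe, compl_compl]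
    rw [← h]
    exact (OnePoint.isOpen_image_coe.2 hlineclosed.isOpen_compl).isClosed_compl
  have hL_conn : IsPreconnected L := by
    have h1 : IsPreconnected (((↑) : V → OnePoint V) '' line) := by
      have hline_conn : IsPreconnected line := by
        rw [hline_def, ← Set.image_univ]
        exact isPreconnected_univ.image _ (continuous_id.smul continuous_const).continuousOn
      exact hline_conn.image _ OnePoint.continuous_coe.continuousOn
    have h2 : L = closure (((↑) : V → OnePoint V) '' line) := by
      apply Set.Subset.antisymm
      · rintro x (hx | hx)
        · exact subset_closure hx
        · obtain rfl : x = ∞ := hx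
          rw [mem_closure_iff]
          intro o ho hmem
          have hKcp : IsCompact ((((↑) : V → OnePoint V) ⁻¹' o)ᶜ) :=
            ((OnePoint.isOpen_def).1 ho).1 hmem
          obtain ⟨R, hR0, hRK⟩ := hKcp.isBounded.subset_closedBall_lt 0 0
          set μ := (R + 1) / ‖v₁‖ with hμ_def
          have hv₁pos : 0 < ‖v₁‖ := norm_pos_iff.2 hv₁
          have hnorm : ‖μ • v₁‖ = R + 1 := by
            rw [norm_smul, Real.norm_eq_abs, hμ_def, abs_of_pos (by positivity)]
            field_simp
          have hnotin : μ • v₁ ∉ (((↑) : V → OnePoint V) ⁻¹' o)ᶜ := by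
            intro hin
            have := hRK hin
            rw [Metric.mem_closedBall, dist_zero_right, hnorm] at this
            linarith
          have hin : μ • v₁ ∈ (((↑) : V → OnePoint V) ⁻¹' o) := not_not.1 hnotin
          exact ⟨((μ • v₁ : V) : OnePoint V), hin, ⟨μ • v₁, ⟨μ, rfl⟩, rfl⟩⟩
      · exact closure_minimal (fun x hx => Or.inl hx) hLclosed
    rw [h2]
    exact h1.closure
  -- `L ∩ A` is nonempty
  have hmem_line_zero : ((0 : V) : OnePoint V) ∈ L :=
    Or.inl ⟨0, ⟨0, zero_smul ℝ v₁⟩, rfl⟩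
  have hLA : (L ∩ A).Nonempty := by
    obtain ⟨a, ha⟩ := hA_ne
    induction a with
    | infty => exact ⟨∞, Or.inr rfl, ha⟩
    | coe w =>
      by_cases hw : w = 0
      · subst hw
        exact ⟨((0 : V) : OnePoint V), hmem_line_zero, ha⟩
      · have h0 : ((0 : V) : OnePoint V) ∈ A := by
          rw [← hA_closed.closure_eq]
          rw [mem_closure_iff]
          intro o ho hmem
          have hoV : IsOpen (((↑) : V → OnePoint V) ⁻¹' o) :=
            ho.preimage OnePoint.continuous_coe
          obtain ⟨δ, hδ0, hδ⟩ := Metric.isOpen_iff.1 hoV 0 hmem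
          have hwpos : 0 < ‖w‖ := norm_pos_iff.2 hw
          set cc := δ / (2 * ‖w‖) with hcc_def
          have hccpos : 0 < cc := by positivity
          have hball : cc • w ∈ Metric.ball (0 : V) δ := by
            rw [Metric.mem_ball, dist_zero_right, norm_smul, Real.norm_eq_abs,
              abs_of_pos hccpos, hcc_def, div_mul_eq_mul_div, div_lt_iff₀ (by positivity)]
            nlinarith
          refine ⟨((cc • w : V) : OnePoint V), hδ hball, ?_⟩
          have := hscale cc hccpos _ ha
          rwa [sm_coe] at this
        exact ⟨((0 : V) : OnePoint V), hmem_line_zero, h0⟩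
  -- `L ⊆ A`
  have hLsubA : L ⊆ A := by
    by_contra hcon
    obtain ⟨x, hxL, hxA⟩ := Set.not_subset.1 hcon
    have hcover : L ⊆ interior N ∪ Aᶜ := by
      intro z hz
      by_cases hzA : z ∈ A
      · exact Or.inl (hAN hzA)
      · exact Or.inr hzA
    obtain ⟨a, haL, haA⟩ := hLA
    have hne1 : (L ∩ interior N).Nonempty := ⟨a, haL, hAN haA⟩
    have hne2 : (L ∩ Aᶜ).Nonempty := ⟨x, hxL, hxA⟩
    obtain ⟨z, hzL, hzint, hzA⟩ := hL_conn (interior N) Aᶜ isOpen_interior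
      hA_closed.isOpen_compl hcover hne1 hne2
    exact hzA (hL_elem z hzL hzint)
  have h0A : ((0 : V) : OnePoint V) ∈ A := hLsubA hmem_line_zero
  have hinfA : (∞ : OnePoint V) ∈ A := hLsubA (Or.inr rfl)
  -- the complementary repeller is empty
  have hωne : ∀ p : OnePoint V, (omegaSet (expFlow D) {p} ∩ A).Nonempty := by
    intro p
    rw [Set.nonempty_iff_ne_empty]
    intro hr
    induction p with
    | infty =>
      have hmem : (∞ : OnePoint V) ∈ omegaSet (expFlow D) {(∞ : OnePoint V)} :=
        mem_omegaSet_of_returns D (fun t => ⟨t, le_refl t, rfl⟩) rfl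
      have : (∞ : OnePoint V) ∈ omegaSet (expFlow D) {(∞ : OnePoint V)} ∩ A := ⟨hmem, hinfA⟩
      rw [hr] at this
      exact this
    | coe w =>
      by_cases hw : w = 0
      · subst hw
        have hfix0 : ∀ t : ℝ, expFlow D ((0 : V) : OnePoint V) t = ((0 : V) : OnePoint V) := by
          intro t
          rw [expFlow_coe, map_zero]
        have hmem : ((0 : V) : OnePoint V) ∈ omegaSet (expFlow D) {((0 : V) : OnePoint V)} :=
          mem_omegaSet_of_returns D (fun t => ⟨t, le_refl t, hfix0 t⟩) rfl
        have : ((0 : V) : OnePoint V) ∈ omegaSet (expFlow D) {((0 : V) : OnePoint V)} ∩ A :=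
          ⟨hmem, h0A⟩
        rw [hr] at this
        exact this
      · -- `w ≠ 0` : scale it into `interior N` near `0`
        have h0int : (0 : V) ∈ (((↑) : V → OnePoint V) ⁻¹' interior N) := hAN h0A
        have hoV : IsOpen (((↑) : V → OnePoint V) ⁻¹' interior N) :=
          isOpen_interior.preimage OnePoint.continuous_coe
        obtain ⟨δ, hδ0, hδ⟩ := Metric.isOpen_iff.1 hoV 0 h0int
        have hwpos : 0 < ‖w‖ := norm_pos_iff.2 hw
        set cc := δ / (2 * ‖w‖) with hcc_def
        have hccpos : 0 < cc := by positivity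
        have hball : cc • w ∈ Metric.ball (0 : V) δ := by
          rw [Metric.mem_ball, dist_zero_right, norm_smul, Real.norm_eq_abs,
            abs_of_pos hccpos, hcc_def, div_mul_eq_mul_div, div_lt_iff₀ (by positivity)]
          nlinarith
        have hcw : ((cc • w : V) : OnePoint V) ∈ interior N := hδ hball
        have hsub : omegaSet (expFlow D) {((cc • w : V) : OnePoint V)} ⊆ A := by
          rw [← hωN]
          exact omegaSet_mono _ (Set.singleton_subset_iff.2 (interior_subset hcw))
        obtain ⟨b, hb⟩ := omegaSet_nonempty (expFlow D)
          (Set.singleton_nonempty (((cc • w : V) : OnePoint V)))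
        have hb' : sm cc⁻¹ b ∈ omegaSet (expFlow D) {sm cc⁻¹ (((cc • w : V) : OnePoint V))} := by
          have h := image_omegaSet_subset (expFlow D)
            (continuous_sm (V := V) (inv_ne_zero (ne_of_gt hccpos)))
            (fun y s => sm_expFlow D cc⁻¹ y s) {(((cc • w : V) : OnePoint V))} ⟨b, hb, rfl⟩
          rwa [Set.image_singleton] at h
        have hsmw : sm cc⁻¹ (((cc • w : V) : OnePoint V)) = ((w : V) : OnePoint V) := by
          rw [sm_coe, smul_smul, inv_mul_cancel₀ (ne_of_gt hccpos), one_smul]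
        rw [hsmw] at hb'
        have hbA : sm cc⁻¹ b ∈ A := hscale cc⁻¹ (by positivity) b (hsub hb)
        have : sm cc⁻¹ b ∈ omegaSet (expFlow D) {((w : V) : OnePoint V)} ∩ A := ⟨hb', hbA⟩
        rw [hr] at this
        exact this
  -- final contradiction via the α-limit set of `x₀`
  obtain ⟨p, hp⟩ := omegaStarSet_nonempty (expFlow D) (Set.singleton_nonempty x₀)
  have hdisj : ∀ q ∈ omegaStarSet (expFlow D) {x₀}, q ∉ interior N := by
    intro q hq hqN
    apply hx₀A
    rw [← hωN, mem_omegaSet]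
    intro t
    rw [mem_omegaStarSet] at hq
    obtain ⟨z, hzN, y, hy, s, hs, hz⟩ :=
      mem_closure_iff.1 (hq (-t)) (interior N) isOpen_interior hqN
    have hy' : y = x₀ := hy
    rw [hy'] at hz
    rw [← hz] at hzN
    refine subset_closure ⟨expFlow D x₀ s, interior_subset hzN, -s, by linarith, ?_⟩
    rw [expFlow_expFlow, neg_add_cancel, expFlow_zero]
  obtain ⟨a, haω, haA⟩ := hωne p
  rw [mem_omegaSet] at haω
  obtain ⟨z, hzN, y, hy, s, _, hz⟩ :=
    mem_closure_iff.1 (haω 0) (interior N) isOpen_interior (hAN haA)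
  have hy' : y = p := hy
  rw [hy'] at hz
  rw [← hz] at hzN
  have hmove : expFlow D p s ∈ omegaStarSet (expFlow D) {x₀} := by
    have h1 : expFlow D p s ∈ omegaStarSet (expFlow D) {expFlow D x₀ s} := by
      have h := image_omegaStarSet_subset (expFlow D) (continuous_expFlow D s)
        (fun y u => by rw [expFlow_expFlow, expFlow_expFlow, add_comm]) {x₀} ⟨p, hp, rfl⟩
      rwa [Set.image_singleton] at h
    exact omegaStarSet_singleton_act D x₀ s h1
  exact hdisj _ hmove hzN
end

section
/- Let V be a finite-dimensional real inner product space, and let S, N be commuting linear endomorphisms of V such that exp(tS) is an isometry of V for every t ∈ ℝ and N is nilpotent, with N^k = 0 for some integer k ≥ 2. If v ∈ V satisfies N^{k−1}v ≠ 0, then ‖exp(t(S+N))v‖ → ∞ both as t → ∞ and as t → −∞. -/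
open Filter Topology

set_option synthInstance.maxHeartbeats 1000000
set_option maxHeartbeats 1000000

/-- let `V` be a finite-dimensional real inner product space and `S, N`
commuting endomorphisms of `V` with `exp(tS)` an isometry for all `t ∈ ℝ` and `N`
nilpotent, `N^k = 0` for some `k ≥ 2`. If `N^{k−1}v ≠ 0`, then
`‖exp(t(S+N))v‖ → ∞` both as `t → ∞` and as `t → −∞`. -/
theorem stmt_11 {V : Type*} [NormedAddCommGroup V] [InnerProductSpace ℝ V]
    [FiniteDimensional ℝ V]
    (S N : V →L[ℝ] V) (hcomm : S ∘L N = N ∘L S)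
    (hiso : ∀ t : ℝ, Isometry ⇑(NormedSpace.exp (t • S)))
    (k : ℕ) (hk : 2 ≤ k) (hNk : N ^ k = 0)
    (v : V) (hv : (N ^ (k - 1)) v ≠ 0) :
    Tendsto (fun t : ℝ => ‖NormedSpace.exp (t • (S + N)) v‖) atTop atTop ∧
    Tendsto (fun t : ℝ => ‖NormedSpace.exp (t • (S + N)) v‖) atBot atTop := by
  classical
  set w : V := (N ^ (k - 1)) v with hw
  have hwne : w ≠ 0 := hv
  have hwpos : (0 : ℝ) < ‖w‖ := norm_pos_iff.mpr hwne
  -- Step 1: split the exponential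
  have hc : Commute S N := hcomm
  have hsplit : ∀ t : ℝ, NormedSpace.exp (t • (S + N)) v
      = NormedSpace.exp (t • S) (NormedSpace.exp (t • N) v) := by
    intro t
    have h : NormedSpace.exp (t • (S + N))
        = NormedSpace.exp (t • S) * NormedSpace.exp (t • N) := by
      rw [smul_add]
      exact NormedSpace.exp_add_of_commute_of_mem_ball (𝕂 := ℝ) ((hc.smul_left t).smul_right t)
          ((NormedSpace.expSeries_radius_eq_top ℝ (V →L[ℝ] V)).symm ▸ edist_lt_top _ _)
          ((NormedSpace.expSeries_radius_eq_top ℝ (V →L[ℝ] V)).symm ▸ edist_lt_top _ _)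
    rw [h]; rfl
  -- Step 2: norms agree with exp(tN) v
  have hnorm : ∀ t : ℝ, ‖NormedSpace.exp (t • (S + N)) v‖
      = ‖NormedSpace.exp (t • N) v‖ := by
    intro t
    rw [hsplit t]
    exact (hiso t).norm_map_of_map_zero (map_zero _) _
  -- Step 3: exp(tN) v is a polynomial in t
  have hpoly : ∀ t : ℝ, NormedSpace.exp (t • N) v
      = ∑ n ∈ Finset.range k, ((n.factorial : ℝ)⁻¹ * t ^ n) • ((N ^ n) v) := by
    intro t
    have h1 : NormedSpace.exp (t • N)
        = ∑ n ∈ Finset.range k, (n.factorial : ℝ)⁻¹ • (t • N) ^ n := by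
      rw [NormedSpace.exp_eq_tsum (𝕂 := ℝ)]
      exact tsum_eq_sum (by
        intro n hn
        rw [Finset.mem_range, not_lt] at hn
        rw [smul_pow, pow_eq_zero_of_le hn hNk, smul_zero, smul_zero])
    rw [h1, ContinuousLinearMap.sum_apply]
    refine Finset.sum_congr rfl fun n _ => ?_
    rw [smul_pow, ContinuousLinearMap.smul_apply, ContinuousLinearMap.smul_apply,
      smul_smul, mul_comm]
  -- The scalar polynomial ⟪exp(tN)v, w⟫
  set p : Polynomial ℝ :=
    ∑ j ∈ Finset.range k,
      Polynomial.C ((inner ℝ ((N ^ j) v) w : ℝ) / j.factorial) * Polynomial.X ^ j with hp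
  have heval : ∀ t : ℝ, p.eval t = (inner ℝ (NormedSpace.exp (t • N) v) w : ℝ) := by
    intro t
    rw [hpoly t, sum_inner, hp]
    simp only [Polynomial.eval_finset_sum, Polynomial.eval_mul, Polynomial.eval_C,
      Polynomial.eval_pow, Polynomial.eval_X, real_inner_smul_left]
    refine Finset.sum_congr rfl fun j _ => ?_
    field_simp
  -- leading coefficient
  have hcoeff : p.coeff (k - 1) = (inner ℝ w w : ℝ) / (k - 1).factorial := by
    rw [hp, Polynomial.finset_sum_coeff]
    rw [Finset.sum_eq_single (k - 1)]
    · simp only [← hw]; simp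
    · intro j _ hj
      simp [Polynomial.coeff_X_pow, (Ne.symm hj)]
    · intro h
      exact absurd (Finset.mem_range.mpr (by omega)) h
  have hcoeffne : p.coeff (k - 1) ≠ 0 := by
    rw [hcoeff]
    have : (inner ℝ w w : ℝ) ≠ 0 := inner_self_ne_zero.mpr hwne
    positivity
  have hdeg : 0 < p.degree := by
    have h1 : ((k - 1 : ℕ) : WithBot ℕ) ≤ p.degree := Polynomial.le_degree_of_ne_zero hcoeffne
    refine lt_of_lt_of_le ?_ h1
    exact_mod_cast Nat.sub_pos_of_lt (by omega)
  -- |p.eval t| → ∞ at both ends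
  have htop : Tendsto (fun t : ℝ => |p.eval t|) atTop atTop :=
    Polynomial.abs_tendsto_atTop p hdeg
  have hbot : Tendsto (fun t : ℝ => |p.eval t|) atBot atTop := by
    set q : Polynomial ℝ := p.comp (-Polynomial.X) with hq
    have hdq : 0 < q.degree := by
      rw [← Polynomial.natDegree_pos_iff_degree_pos, hq, Polynomial.natDegree_comp]
      simpa using Polynomial.natDegree_pos_iff_degree_pos.mpr hdeg
    have h1 : Tendsto (fun t : ℝ => |q.eval t|) atTop atTop :=
      Polynomial.abs_tendsto_atTop q hdq
    have h2 := h1.comp tendsto_neg_atBot_atTop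
    refine h2.congr fun t => ?_
    simp [hq, Polynomial.eval_comp]
  -- the norm dominates |p.eval t| / ‖w‖
  have hbound : ∀ t : ℝ, |p.eval t| / ‖w‖ ≤ ‖NormedSpace.exp (t • (S + N)) v‖ := by
    intro t
    rw [hnorm t, div_le_iff₀ hwpos, heval t]
    exact abs_real_inner_le_norm _ _
  constructor
  · exact tendsto_atTop_mono hbound (htop.atTop_div_const hwpos)
  · exact tendsto_atTop_mono hbound (hbot.atTop_div_const hwpos)
end

section
/- Let V be a finite-dimensional real normed vector space and D a linear endomorphism of V such that Re z < 0 for every eigenvalue z ∈ ℂ of the complexification of D. Then for every v ∈ V one has exp(tD)v → 0 as t → ∞. -/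
open Filter Topology NormedSpace TensorProduct

attribute [local instance] Matrix.linftyOpNormedAddCommGroup Matrix.linftyOpNormedRing
  Matrix.linftyOpNormedAlgebra

/-- scalar decay lemma -/
lemma aux_scalar {μ : ℂ} (hμ : μ.re < 0) (m : ℕ) :
    Tendsto (fun t : ℝ => Complex.exp ((t : ℂ) * μ) * (t : ℂ) ^ m) atTop (𝓝 0) := by
  rw [tendsto_zero_iff_norm_tendsto_zero]
  have hnorm : ∀ t : ℝ, ‖Complex.exp ((t : ℂ) * μ) * (t : ℂ) ^ m‖
      = Real.exp (t * μ.re) * |t| ^ m := by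
    intro t
    simp [Complex.norm_exp, abs_pow]
  have key : Tendsto (fun t : ℝ => Real.exp (t * μ.re) * |t| ^ m) atTop (𝓝 0) := by
    have h1 : Tendsto (fun s : ℝ => s ^ m * Real.exp (-s)) atTop (𝓝 0) :=
      Real.tendsto_pow_mul_exp_neg_atTop_nhds_zero m
    have h2 : Tendsto (fun t : ℝ => -μ.re * t) atTop atTop :=
      Tendsto.const_mul_atTop (by linarith) tendsto_id
    have h3 := h1.comp h2
    have h4 : Tendsto (fun t : ℝ => ((-μ.re) ^ m)⁻¹ *
        ((-μ.re * t) ^ m * Real.exp (-(-μ.re * t)))) atTop (𝓝 (((-μ.re) ^ m)⁻¹ * 0)) :=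
      h3.const_mul _
    rw [mul_zero] at h4
    refine h4.congr' ?_
    filter_upwards [eventually_ge_atTop (0:ℝ)] with t ht
    have hne : (-μ.re) ≠ 0 := by linarith
    rw [abs_of_nonneg ht]
    have hnn : ∀ s : ℝ, -(-μ.re * s) = s * μ.re := fun s => by ring
    rw [mul_pow, hnn]
    field_simp
  exact key.congr (fun t => (hnorm t).symm)

lemma aux_matrix {n : Type*} [Fintype n] [DecidableEq n] (A : Matrix n n ℂ)
    (h : ∀ μ : ℂ, Module.End.HasEigenvalue (Matrix.toLinAlgEquiv' A) μ → μ.re < 0) (x : n → ℂ) :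
    Tendsto (fun t : ℝ => (exp (t • A)).mulVec x) atTop (𝓝 0) := by
  set f : Module.End ℂ (n → ℂ) := Matrix.toLinAlgEquiv' A with hf
  have hspan : ⨆ μ : ℂ, f.maxGenEigenspace μ = ⊤ :=
    Module.End.iSup_maxGenEigenspace_eq_top f
  have hx : x ∈ ⨆ μ : ℂ, f.maxGenEigenspace μ := hspan ▸ Submodule.mem_top
  refine Submodule.iSup_induction (motive := fun x => Tendsto (fun t : ℝ => (exp (t • A)).mulVec x) atTop (𝓝 0)) _ hx (fun μ y hy => ?_) ?_ (fun y z hy hz => ?_)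
  case refine_2 =>
    simpa using (tendsto_const_nhds :
      Tendsto (fun _ : ℝ => (0 : n → ℂ)) atTop (𝓝 0))
  case refine_3 =>
    have := hy.add hz
    rw [add_zero] at this
    refine this.congr fun t => ?_
    rw [Matrix.mulVec_add]
  case refine_1 =>
    rcases eq_or_ne y 0 with rfl | hy0
    · simpa using (tendsto_const_nhds :
        Tendsto (fun _ : ℝ => (0 : n → ℂ)) atTop (𝓝 0))
    have hμ : μ.re < 0 := by
      refine h μ ?_
      have : f.maxGenEigenspace μ ≠ ⊥ := by
        intro hbot
        rw [hbot] at hy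
        exact hy0 (Submodule.mem_bot ℂ |>.mp hy)
      rw [← Module.End.iSup_genEigenspace_eq] at this
      obtain ⟨k, hk⟩ : ∃ k : ℕ, f.genEigenspace μ k ≠ ⊥ := by
        by_contra hall
        push_neg at hall
        simp only [hall, iSup_bot] at this
        exact this rfl
      exact Module.End.hasEigenvalue_of_hasGenEigenvalue (k := k) hk
    obtain ⟨k, hk⟩ := (Module.End.mem_maxGenEigenspace f μ y).mp hy
    -- matrix nilpotency on y
    set N : Matrix n n ℂ := A - μ • 1 with hN
    have hNk : (N ^ k).mulVec y = 0 := by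
      have : (f - μ • 1) ^ k = Matrix.toLinAlgEquiv' (N ^ k) := by
        rw [map_pow, map_sub, map_smul, map_one, hf]
      rw [this] at hk
      rw [Matrix.toLinAlgEquiv'_apply] at hk; exact hk
    -- the continuous linear map `M ↦ M.mulVec y`
    let L : Matrix n n ℂ →ₗ[ℂ] (n → ℂ) :=
      { toFun := fun M => M.mulVec y
        map_add' := fun M₁ M₂ => Matrix.add_mulVec M₁ M₂ y
        map_smul' := fun c M => Matrix.smul_mulVec c M y }
    let Lc : Matrix n n ℂ →L[ℂ] (n → ℂ) := LinearMap.toContinuousLinearMap L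
    have hexp : ∀ t : ℝ, (exp (t • A)).mulVec y =
        ∑ m ∈ Finset.range k,
          (((m.factorial : ℂ))⁻¹ * (Complex.exp ((t:ℂ) * μ) * (t:ℂ) ^ m)) •
            (N ^ m).mulVec y := by
      intro t
      have e1 : exp (t • A) = exp ((t : ℂ) • A) := by
        congr 1
      have e2 : (t : ℂ) • A = ((t:ℂ) * μ) • (1 : Matrix n n ℂ) + (t:ℂ) • N := by
        rw [hN]
        rw [smul_sub, smul_smul]
        abel
      have e3 : exp ((t : ℂ) • A)
          = Complex.exp ((t:ℂ) * μ) • exp ((t:ℂ) • N) := by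
        rw [e2, Matrix.exp_add_of_commute _ _ (((Commute.one_left N).smul_left _).smul_right _),
          ← Algebra.algebraMap_eq_smul_one]
        erw [← algebraMap_exp_comm]
        rw [← Complex.exp_eq_exp_ℂ, Algebra.smul_def (Complex.exp ((t:ℂ) * μ))]
      have e4 : (exp ((t:ℂ) • N)).mulVec y
          = ∑ m ∈ Finset.range k, ((m.factorial : ℂ))⁻¹ • ((t:ℂ) ^ m • (N ^ m).mulVec y) := by
        have hsum := expSeries_summable' (𝕂 := ℂ) ((t:ℂ) • N)
        have hLc : ∀ M : Matrix n n ℂ, Lc M = M.mulVec y := fun M => rfl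
        have e5 : (exp ((t:ℂ) • N)).mulVec y = Lc (exp ((t:ℂ) • N)) := rfl
        rw [e5, exp_eq_tsum ℂ, ContinuousLinearMap.map_tsum Lc hsum]
        rw [tsum_eq_sum (s := Finset.range k) ?_]
        · refine Finset.sum_congr rfl fun m _ => ?_
          rw [map_smul, hLc, smul_pow, Matrix.smul_mulVec]
        · intro m hm
          rw [Finset.mem_range, not_lt] at hm
          rw [map_smul, hLc, smul_pow, Matrix.smul_mulVec]
          have : N ^ m = N ^ (m - k) * N ^ k := by
            rw [← pow_add]
            congr 1
            omega
          rw [this, ← Matrix.mulVec_mulVec, hNk, Matrix.mulVec_zero]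
          simp
      rw [e1, e3, Matrix.smul_mulVec, e4, Finset.smul_sum]
      refine Finset.sum_congr rfl fun m _ => ?_
      rw [smul_smul, smul_smul]
      congr 1
      ring
    refine Tendsto.congr (fun t => (hexp t).symm) ?_
    have : Tendsto (fun t : ℝ => ∑ m ∈ Finset.range k,
        (((m.factorial : ℂ))⁻¹ * (Complex.exp ((t:ℂ) * μ) * (t:ℂ) ^ m)) • (N ^ m).mulVec y)
        atTop (𝓝 (∑ m ∈ Finset.range k, (0 : n → ℂ))) := by
      refine tendsto_finset_sum _ fun m _ => ?_
      have hs : Tendsto (fun t : ℝ =>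
          ((m.factorial : ℂ))⁻¹ * (Complex.exp ((t:ℂ) * μ) * (t:ℂ) ^ m)) atTop (𝓝 0) := by
        have := (aux_scalar hμ m).const_mul (((m.factorial : ℂ))⁻¹)
        rwa [mul_zero] at this
      have := hs.smul_const ((N ^ m).mulVec y)
      rwa [zero_smul] at this
    simpa using this

/-- if every eigenvalue of the complexification of an endomorphism `D`
of a finite-dimensional real normed space `V` has negative real part, then
`exp(tD)v → 0` as `t → ∞`, for every `v ∈ V`. -/
theorem stmt_14 {V : Type*} [NormedAddCommGroup V] [NormedSpace ℝ V]
    [FiniteDimensional ℝ V] (D : V →L[ℝ] V)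
    (heig : ∀ z : ℂ, Module.End.HasEigenvalue
      (LinearMap.baseChange ℂ (D : V →ₗ[ℝ] V)) z → z.re < 0)
    (v : V) :
    Tendsto (fun t : ℝ => NormedSpace.exp (t • D) v) atTop (𝓝 0) := by
  classical
  let b : Module.Basis (Fin (Module.finrank ℝ V)) ℝ V := Module.finBasis ℝ V
  -- an ℝ-algebra hom from continuous endomorphisms to complex matrices
  let e1 : (V →L[ℝ] V) →ₐ[ℝ] (V →ₗ[ℝ] V) :=
    { ContinuousLinearMap.toLinearMapRingHom (R₁ := ℝ) (M₁ := V) with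
      commutes' := fun r => by
        ext w
        simp [Algebra.algebraMap_eq_smul_one] }
  let π : (V →L[ℝ] V) →ₐ[ℝ] Matrix (Fin (Module.finrank ℝ V)) (Fin (Module.finrank ℝ V)) ℂ :=
    ((Algebra.ofId ℝ ℂ).mapMatrix.comp (LinearMap.toMatrixAlgEquiv b).toAlgHom).comp e1
  have hπcont : Continuous π := π.toLinearMap.continuous_of_finiteDimensional
  have hπT : ∀ T : V →L[ℝ] V,
      π T = (LinearMap.toMatrix b b (T : V →ₗ[ℝ] V)).map (algebraMap ℝ ℂ) := by
    intro T
    ext i j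
    simp [π, e1, Algebra.ofId, LinearMap.toMatrixAlgEquiv]
  set A : Matrix (Fin (Module.finrank ℝ V)) (Fin (Module.finrank ℝ V)) ℂ := π D with hA
  -- eigenvalue hypothesis transfers to `A`
  have heigA : ∀ μ : ℂ, Module.End.HasEigenvalue (Matrix.toLinAlgEquiv' A) μ → μ.re < 0 := by
    intro μ hμ
    apply heig
    rw [Module.End.hasEigenvalue_iff_mem_spectrum] at hμ ⊢
    rw [AlgEquiv.spectrum_eq (Matrix.toLinAlgEquiv'
      (R := ℂ) (n := Fin (Module.finrank ℝ V))) A] at hμ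
    let bc : Module.Basis (Fin (Module.finrank ℝ V)) ℂ (ℂ ⊗[ℝ] V) := Algebra.TensorProduct.basis ℂ b
    have hbc : LinearMap.toMatrixAlgEquiv bc (LinearMap.baseChange ℂ (D : V →ₗ[ℝ] V)) = A := by
      have h1 : LinearMap.toMatrixAlgEquiv bc (LinearMap.baseChange ℂ (D : V →ₗ[ℝ] V))
          = LinearMap.toMatrix bc bc (LinearMap.baseChange ℂ (D : V →ₗ[ℝ] V)) := rfl
      rw [h1, LinearMap.toMatrix_baseChange, hA, hπT]
    rw [← AlgEquiv.spectrum_eq (LinearMap.toMatrixAlgEquiv bc), hbc]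
    exact hμ
  -- coordinates map
  let c : V → (Fin (Module.finrank ℝ V) → ℂ) := fun w i => ((b.repr w) i : ℂ)
  have hc : ∀ (T : V →L[ℝ] V) (w : V), (π T).mulVec (c w) = c (T w) := by
    intro T w
    have h1 : (LinearMap.toMatrix b b (T : V →ₗ[ℝ] V)).mulVec (b.repr w) = b.repr (T w) :=
      LinearMap.toMatrix_mulVec_repr b b _ w
    funext i
    have h2 := congrFun h1 i
    simp only [Matrix.mulVec, dotProduct] at h2 ⊢
    rw [hπT]
    simp only [Matrix.map_apply, c]
    push_cast
    rw [← h2]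
    push_cast
    simp only [Complex.coe_algebraMap]
  have key : Tendsto (fun t : ℝ => c (NormedSpace.exp (t • D) v)) atTop (𝓝 0) := by
    refine (aux_matrix A heigA (c v)).congr fun t => ?_
    rw [← hc (NormedSpace.exp (t • D)) v]
    congr 1
    rw [map_exp_of_mem_ball (𝕂 := ℝ) π hπcont (t • D)
      ((expSeries_radius_eq_top ℝ (V →L[ℝ] V)).symm ▸ edist_lt_top _ _), map_smul]
    rfl
  -- recover convergence in `V`
  have hcont : Continuous (fun y : Fin (Module.finrank ℝ V) → ℂ =>
      b.equivFunL.symm (fun i => (y i).re)) :=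
    b.equivFunL.symm.continuous.comp
      (continuous_pi fun i => Complex.continuous_re.comp (continuous_apply i))
  have hrepr : (fun t : ℝ => NormedSpace.exp (t • D) v)
      = fun t => b.equivFunL.symm (fun i => ((c (NormedSpace.exp (t • D) v)) i).re) := by
    funext t
    have h3 : (fun i => ((c (NormedSpace.exp (t • D) v)) i).re)
        = b.equivFunL (NormedSpace.exp (t • D) v) := by
      funext i
      show ((b.repr (NormedSpace.exp (t • D) v)) i : ℂ).re
        = b.equivFun (NormedSpace.exp (t • D) v) i
      simp [Module.Basis.equivFun_apply]
    rw [h3, ContinuousLinearEquiv.symm_apply_apply]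
  rw [hrepr]
  have hfin := (hcont.tendsto 0).comp key
  have h0 : b.equivFunL.symm (fun i => ((0 : Fin (Module.finrank ℝ V) → ℂ) i).re) = 0 := by
    simp only [Pi.zero_apply, Complex.zero_re]
    have : (fun _ : Fin (Module.finrank ℝ V) => (0:ℝ)) = 0 := rfl
    rw [this, map_zero]
  rwa [h0] at hfin
end

section
/- Let V be a finite-dimensional real normed vector space and D a linear endomorphism of V such that Re z > 0 for every eigenvalue z ∈ ℂ of the complexification of D. Then for every v ∈ V with v ≠ 0 one has ‖exp(tD)v‖ → ∞ as t → ∞. -/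
open Filter Topology NormedSpace TensorProduct

section Helpers

variable {E : Type*} [NormedAddCommGroup E] [NormedSpace ℂ E] [CompleteSpace E]

/-- Applying the exponential of an operator to a vector, as a series. -/
lemma exp_apply_eq_tsum (B : E →L[ℂ] E) (x : E) :
    NormedSpace.exp B x = ∑' k : ℕ, ((k.factorial : ℂ))⁻¹ • ((B ^ k) x) := by
  have h0 := NormedSpace.exp_series_hasSum_exp' (𝕂 := ℂ) B
  have h1 := h0.mapL (ContinuousLinearMap.apply ℂ E x)
  simpa using h1.tsum_eq.symm

lemma exp_apply_eq_sum (B : E →L[ℂ] E) (x : E) (n : ℕ)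
    (h : ∀ k, n ≤ k → (B ^ k) x = 0) :
    NormedSpace.exp B x = ∑ k ∈ Finset.range n, ((k.factorial : ℂ))⁻¹ • ((B ^ k) x) := by
  rw [exp_apply_eq_tsum]
  exact tsum_eq_sum (fun k hk => by
    rw [h k (by simpa using hk), smul_zero])

/-- Splitting off the scalar part of the exponential. -/
lemma exp_smul_split (T : E →L[ℂ] E) (μ : ℂ) (t : ℝ) :
    NormedSpace.exp (t • T)
      = Complex.exp ((t : ℂ) * μ) • NormedSpace.exp (t • (T - μ • 1)) := by
  have h1 : t • T = (((t : ℂ) * μ) • (1 : E →L[ℂ] E)) + t • (T - μ • 1) := by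
    ext x
    simp only [ContinuousLinearMap.smul_apply, ContinuousLinearMap.add_apply,
      ContinuousLinearMap.sub_apply, ContinuousLinearMap.one_apply, smul_sub]
    have h2 : t • (μ • x) = ((t : ℂ) * μ) • x := by
      rw [← algebraMap_smul ℂ t (μ • x), smul_smul, Complex.coe_algebraMap]
    rw [← h2]
    abel
  have hcomm : Commute ((((t : ℂ) * μ)) • (1 : E →L[ℂ] E)) (t • (T - μ • 1)) :=
    (Commute.one_left _).smul_left _
  letI : NormedAlgebra ℚ (E →L[ℂ] E) := .restrictScalars ℚ ℂ _
  rw [h1, NormedSpace.exp_add_of_commute hcomm]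
  have h2 : (((t : ℂ) * μ) • (1 : E →L[ℂ] E)) = algebraMap ℂ (E →L[ℂ] E) ((t : ℂ) * μ) :=
    (Algebra.algebraMap_eq_smul_one _).symm
  rw [h2, ← NormedSpace.algebraMap_exp_comm, ← Complex.exp_eq_exp_ℂ, ← Algebra.smul_def]

end Helpers

section KeyC

variable {E : Type*} [NormedAddCommGroup E] [NormedSpace ℂ E] [FiniteDimensional ℂ E]

lemma pow_apply_norm_le (B : E →L[ℂ] E) (k : ℕ) (x : E) : ‖(B ^ k) x‖ ≤ ‖B‖ ^ k * ‖x‖ := by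
  induction k generalizing x with
  | zero => simp
  | succ k ih =>
    rw [pow_succ]
    simp only [ContinuousLinearMap.mul_apply]
    calc ‖(B ^ k) (B x)‖ ≤ ‖B‖ ^ k * ‖B x‖ := ih (B x)
      _ ≤ ‖B‖ ^ k * (‖B‖ * ‖x‖) := by
          gcongr
          exact B.le_opNorm x
      _ = ‖B‖ ^ (k + 1) * ‖x‖ := by ring

/-- Powers of `T - μ•1` as continuous maps agree with powers of the endomorphism. -/
lemma pow_sub_smul_apply (T : E →L[ℂ] E) (μ : ℂ) (k : ℕ) (x : E) :
    (((T - μ • 1 : E →L[ℂ] E)) ^ k) x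
      = ((((T : E →ₗ[ℂ] E) - μ • 1 : Module.End ℂ E)) ^ k) x := by
  induction k with
  | zero => simp
  | succ k ih =>
    rw [pow_succ', pow_succ']
    simp only [ContinuousLinearMap.mul_apply, Module.End.mul_apply]
    rw [ih]
    simp [Module.End.mul_apply]

/-- Vanishing of high powers on the generalized eigenspace. -/
lemma pow_sub_smul_eq_zero (T : E →L[ℂ] E) (μ : ℂ) (x : E)
    (hx : x ∈ Module.End.maxGenEigenspace (T : E →ₗ[ℂ] E) μ) (k : ℕ)
    (hk : Module.finrank ℂ E ≤ k) :
    (((T - μ • 1 : E →L[ℂ] E)) ^ k) x = 0 := by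
  set f : Module.End ℂ E := (T : E →ₗ[ℂ] E)
  have hx' : x ∈ f.genEigenspace μ (Module.finrank ℂ E) := by
    rwa [← Module.End.maxGenEigenspace_eq_genEigenspace_finrank]
  rw [Module.End.mem_genEigenspace_nat, LinearMap.mem_ker] at hx'
  have hpow : (f - μ • 1) ^ k
      = (f - μ • 1) ^ (k - Module.finrank ℂ E) * (f - μ • 1) ^ (Module.finrank ℂ E) := by
    rw [← pow_add]
    congr 1
    omega
  rw [pow_sub_smul_apply, hpow, Module.End.mul_apply, hx', map_zero]

lemma mem_maxGen_pow_sub_smul (T : E →L[ℂ] E) (μ : ℂ) (k : ℕ) (x : E)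
    (hx : x ∈ Module.End.maxGenEigenspace (T : E →ₗ[ℂ] E) μ) :
    (((T - μ • 1 : E →L[ℂ] E)) ^ k) x ∈ Module.End.maxGenEigenspace (T : E →ₗ[ℂ] E) μ := by
  induction k with
  | zero => simpa using hx
  | succ k ih =>
    have hstep : ∀ y, y ∈ Module.End.maxGenEigenspace (T : E →ₗ[ℂ] E) μ →
        (T - μ • 1 : E →L[ℂ] E) y ∈ Module.End.maxGenEigenspace (T : E →ₗ[ℂ] E) μ := by
      intro y hy
      have h1 : (T - μ • 1 : E →L[ℂ] E) y = (T : E →ₗ[ℂ] E) y - μ • y := by simp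
      rw [h1]
      exact Submodule.sub_mem _
        (Module.End.mapsTo_maxGenEigenspace_of_comm (Commute.refl _) μ hy)
        (Submodule.smul_mem _ _ hy)
    rw [pow_succ']
    simp only [ContinuousLinearMap.mul_apply]
    exact hstep _ ih

/-- The exponential of `t • (T - μ•1)` applied to a generalized eigenvector,
as a finite sum. -/
lemma exp_nilp_apply (T : E →L[ℂ] E) (μ : ℂ) (t : ℝ) (x : E)
    (hx : x ∈ Module.End.maxGenEigenspace (T : E →ₗ[ℂ] E) μ) :
    NormedSpace.exp (t • (T - μ • 1)) x
      = ∑ k ∈ Finset.range (Module.finrank ℂ E),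
          ((k.factorial : ℂ))⁻¹ • (((t • (T - μ • 1) : E →L[ℂ] E)) ^ k) x := by
  refine exp_apply_eq_sum _ _ _ (fun k hk => ?_)
  rw [smul_pow, ContinuousLinearMap.smul_apply, pow_sub_smul_eq_zero T μ x hx k hk, smul_zero]

lemma exp_nilp_mem (T : E →L[ℂ] E) (μ : ℂ) (t : ℝ) (x : E)
    (hx : x ∈ Module.End.maxGenEigenspace (T : E →ₗ[ℂ] E) μ) :
    NormedSpace.exp (t • (T - μ • 1)) x
      ∈ Module.End.maxGenEigenspace (T : E →ₗ[ℂ] E) μ := by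
  rw [exp_nilp_apply T μ t x hx]
  refine Submodule.sum_mem _ (fun k _ => Submodule.smul_mem _ _ ?_)
  rw [smul_pow, ContinuousLinearMap.smul_apply]
  exact Submodule.smul_of_tower_mem _ _ (mem_maxGen_pow_sub_smul T μ k x hx)

/-- The exponential preserves generalized eigenspaces. -/
lemma exp_maxGen_mem (T : E →L[ℂ] E) (μ : ℂ) (t : ℝ) (x : E)
    (hx : x ∈ Module.End.maxGenEigenspace (T : E →ₗ[ℂ] E) μ) :
    NormedSpace.exp (t • T) x ∈ Module.End.maxGenEigenspace (T : E →ₗ[ℂ] E) μ := by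
  rw [exp_smul_split T μ t]
  simp only [ContinuousLinearMap.smul_apply]
  exact Submodule.smul_mem _ _ (exp_nilp_mem T μ t x hx)

/-- Norm bound for the nilpotent part. -/
lemma exp_nilp_norm_le (T : E →L[ℂ] E) (μ : ℂ) (t : ℝ) (x : E)
    (hx : x ∈ Module.End.maxGenEigenspace (T : E →ₗ[ℂ] E) μ) :
    ‖NormedSpace.exp (t • (T - μ • 1)) x‖
      ≤ (∑ k ∈ Finset.range (Module.finrank ℂ E),
          ((k.factorial : ℝ))⁻¹ * (|t| * ‖T - μ • (1 : E →L[ℂ] E)‖) ^ k) * ‖x‖ := by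
  rw [exp_nilp_apply T μ t x hx, Finset.sum_mul]
  refine (norm_sum_le _ _).trans (Finset.sum_le_sum fun k _ => ?_)
  rw [norm_smul]
  have h1 : ‖((k.factorial : ℂ))⁻¹‖ = ((k.factorial : ℝ))⁻¹ := by
    rw [norm_inv]; norm_num
  rw [h1, mul_assoc]
  refine mul_le_mul_of_nonneg_left ?_ (by positivity)
  calc ‖(((t • (T - μ • 1) : E →L[ℂ] E)) ^ k) x‖
      ≤ ‖(t • (T - μ • 1) : E →L[ℂ] E)‖ ^ k * ‖x‖ := pow_apply_norm_le _ k x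
    _ = (|t| * ‖T - μ • (1 : E →L[ℂ] E)‖) ^ k * ‖x‖ := by
        rw [norm_smul t (T - μ • (1 : E →L[ℂ] E)), Real.norm_eq_abs]

set_option maxHeartbeats 2000000 in
/-- Key lemma over ℂ. -/
theorem keyC (T : E →L[ℂ] E)
    (heig : ∀ z : ℂ, Module.End.HasEigenvalue (T : E →ₗ[ℂ] E) z → 0 < z.re)
    (w : E) (hw : w ≠ 0) :
    Tendsto (fun t : ℝ => ‖NormedSpace.exp (t • T) w‖) atTop atTop := by
  classical
  have hnt : Nontrivial E := nontrivial_of_ne w 0 hw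
  set f : Module.End ℂ E := (T : E →ₗ[ℂ] E) with hf
  set n : ℕ := Module.finrank ℂ E with hn
  have hn1 : 1 ≤ n := Module.finrank_pos
  -- decompose w into generalized eigenvectors
  have htop : ⨆ μ : ℂ, f.maxGenEigenspace μ = ⊤ := Module.End.iSup_maxGenEigenspace_eq_top f
  have hwmem : w ∈ ⨆ μ : ℂ, f.maxGenEigenspace μ := htop ▸ Submodule.mem_top
  obtain ⟨c, hc_mem, hc_sum⟩ := (Submodule.mem_iSup_iff_exists_finsupp _ w).mp hwmem
  obtain ⟨z, hz0⟩ : ∃ μ, c μ ≠ 0 := by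
    by_contra h
    push_neg at h
    apply hw
    rw [← hc_sum]
    simp only [Finsupp.sum]
    exact Finset.sum_eq_zero fun μ _ => h μ
  set u : E := c z with hu_def
  have hu_mem : u ∈ f.maxGenEigenspace z := hc_mem z
  -- the eigenvalue `z` has positive real part
  have hz_re : 0 < z.re := by
    apply heig z
    have hne : f.maxGenEigenspace z ≠ ⊥ := by
      intro h
      rw [h, Submodule.mem_bot] at hu_mem
      exact hz0 hu_mem
    refine Module.End.hasEigenvalue_of_hasGenEigenvalue (k := Module.finrank ℂ E)
      (fun hbot => hne ?_)
    rw [Module.End.maxGenEigenspace_eq_genEigenspace_finrank]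
    exact hbot
  -- the nilpotent part
  set N : E →L[ℂ] E := T - z • 1 with hN
  set Q : ℝ → ℝ := fun t => ∑ k ∈ Finset.range n,
      ((k.factorial : ℝ))⁻¹ * (|t| * ‖N‖) ^ k with hQ
  set y : ℝ → E := fun t => NormedSpace.exp (t • N) u with hy
  have hy_mem : ∀ t : ℝ, y t ∈ f.maxGenEigenspace z := fun t => exp_nilp_mem T z t u hu_mem
  have hy_inv : ∀ t : ℝ, NormedSpace.exp ((-t) • N) (y t) = u := by
    intro t
    have hcomm : Commute ((-t) • N) (t • N) := ((Commute.refl N).smul_left (-t)).smul_right t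
    letI : NormedAlgebra ℚ (E →L[ℂ] E) := .restrictScalars ℚ ℂ _
    have hmul : NormedSpace.exp ((-t) • N) * NormedSpace.exp (t • N) = 1 := by
      rw [← NormedSpace.exp_add_of_commute hcomm, ← add_smul, neg_add_cancel, zero_smul,
        NormedSpace.exp_zero]
    calc NormedSpace.exp ((-t) • N) (y t)
        = (NormedSpace.exp ((-t) • N) * NormedSpace.exp (t • N)) u := by
          rw [ContinuousLinearMap.mul_apply]
      _ = u := by rw [hmul, ContinuousLinearMap.one_apply]
  have hu_norm : ∀ t : ℝ, ‖u‖ ≤ Q t * ‖y t‖ := by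
    intro t
    have h0 := exp_nilp_norm_le T z (-t) (y t) (hy_mem t)
    rw [← hN] at h0
    rw [hy_inv t] at h0
    simpa [hQ, abs_neg] using h0
  have hsplit_u : ∀ t : ℝ, NormedSpace.exp (t • T) u = Complex.exp ((t : ℂ) * z) • y t := by
    intro t
    rw [exp_smul_split T z t, ← hN]
    simp [ContinuousLinearMap.smul_apply, hy]
  -- the projection onto the generalized eigenspace of `z`
  have ind := f.independent_maxGenEigenspace
  set F : Submodule ℂ E := ⨆ (μ : ℂ) (_ : μ ≠ z), f.maxGenEigenspace μ with hF
  have hdis : Disjoint (f.maxGenEigenspace z) F := ind z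
  have hcodis : Codisjoint (f.maxGenEigenspace z) F := by
    rw [codisjoint_iff_le_sup, ← htop]
    refine iSup_le fun μ => ?_
    by_cases hμ : μ = z
    · subst hμ; exact le_sup_left
    · exact le_trans (le_iSup₂ (f := fun μ _ => f.maxGenEigenspace μ) μ hμ) le_sup_right
  have hcompl : IsCompl (f.maxGenEigenspace z) F := ⟨hdis, hcodis⟩
  set πL : E →L[ℂ] E :=
    LinearMap.toContinuousLinearMap ((f.maxGenEigenspace z).subtype ∘ₗ
      (Submodule.projectionOnto _ F hcompl)) with hπL
  have hπ_apply : ∀ x : E, πL x =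
      ((Submodule.projectionOnto _ F hcompl) x : E) := by
    intro x
    simp [hπL]
  have hπ_left : ∀ x : E, x ∈ f.maxGenEigenspace z → πL x = x := by
    intro x hx
    rw [hπ_apply]
    have h1 := Submodule.projectionOnto_apply_left hcompl ⟨x, hx⟩
    rw [Submodule.coe_mk] at h1 ⊢
    rw [h1]
  have hπ_right : ∀ x : E, x ∈ F → πL x = 0 := by
    intro x hx
    rw [hπ_apply, Submodule.projectionOnto_apply_of_mem_right hcompl hx,
      Submodule.coe_zero]
  have hπ_exp : ∀ t : ℝ, πL (NormedSpace.exp (t • T) w) = NormedSpace.exp (t • T) u := by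
    intro t
    have hw_sum : w = ∑ μ ∈ c.support, c μ := hc_sum.symm
    rw [hw_sum, map_sum, map_sum,
      Finset.sum_eq_single_of_mem z (Finsupp.mem_support_iff.mpr hz0) ?side]
    · exact hπ_left _ (exp_maxGen_mem T z t u hu_mem)
    case side =>
      intro μ _ hμz
      apply hπ_right
      have hmem : NormedSpace.exp (t • T) (c μ) ∈ f.maxGenEigenspace μ :=
        exp_maxGen_mem T μ t _ (hc_mem μ)
      exact le_iSup₂ (f := fun μ _ => f.maxGenEigenspace μ) μ hμz hmem
  -- constants
  have hu_ne : u ≠ 0 := hz0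
  have hu_pos : 0 < ‖u‖ := norm_pos_iff.mpr hu_ne
  have hπu : πL u = u := hπ_left u hu_mem
  have hπL_ne : πL ≠ 0 := by
    intro h
    rw [h, ContinuousLinearMap.zero_apply] at hπu
    exact hu_ne hπu.symm
  have hCp : 0 < ‖πL‖ := norm_pos_iff.mpr hπL_ne
  set M : ℝ := max 1 ‖N‖ with hM
  have hM1 : (1 : ℝ) ≤ M := le_max_left _ _
  set Cn : ℝ := (n : ℝ) * M ^ n with hCn_def
  have hCn : 0 < Cn := by
    apply mul_pos
    · exact_mod_cast Nat.pos_of_ne_zero (by omega)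
    · positivity
  have hQ_le : ∀ t : ℝ, 1 ≤ t → Q t ≤ Cn * t ^ n := by
    intro t ht
    have ht0 : (0 : ℝ) < t := lt_of_lt_of_le one_pos ht
    have habs : |t| = t := abs_of_pos ht0
    calc Q t = ∑ k ∈ Finset.range n, ((k.factorial : ℝ))⁻¹ * (t * ‖N‖) ^ k := by
          simp only [hQ, habs]
      _ ≤ ∑ k ∈ Finset.range n, M ^ n * t ^ n := by
          refine Finset.sum_le_sum fun k hk => ?_
          have hk' : k ≤ n := le_of_lt (Finset.mem_range.mp hk)
          have h1 : ((k.factorial : ℝ))⁻¹ ≤ 1 := by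
            rw [inv_le_one_iff₀]
            right
            exact_mod_cast Nat.one_le_iff_ne_zero.mpr k.factorial_ne_zero
          have h2 : (t * ‖N‖) ^ k ≤ (t * M) ^ k := by
            apply pow_le_pow_left₀ (by positivity)
            exact mul_le_mul_of_nonneg_left (le_max_right _ _) ht0.le
          have h3 : (t * M) ^ k ≤ (t * M) ^ n := by
            apply pow_le_pow_right₀ _ hk'
            nlinarith
          calc ((k.factorial : ℝ))⁻¹ * (t * ‖N‖) ^ k ≤ 1 * (t * M) ^ n := by
                apply mul_le_mul h1 (h2.trans h3) (by positivity) one_pos.le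
            _ = M ^ n * t ^ n := by rw [one_mul, mul_pow]; ring
      _ = Cn * t ^ n := by
          rw [Finset.sum_const, Finset.card_range, nsmul_eq_mul, hCn_def]
          ring
  -- the key inequality
  have hkey : ∀ t : ℝ, 1 ≤ t →
      Real.exp (z.re * t) * ‖u‖ ≤ (‖πL‖ * (Cn * t ^ n)) * ‖NormedSpace.exp (t • T) w‖ := by
    intro t ht
    have ht0 : (0 : ℝ) < t := lt_of_lt_of_le one_pos ht
    have h3 : ‖NormedSpace.exp (t • T) u‖ = Real.exp (z.re * t) * ‖y t‖ := by
      rw [hsplit_u t, norm_smul, Complex.norm_exp]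
      have hre : ((t : ℂ) * z).re = z.re * t := by
        simp [Complex.mul_re]
        ring
      rw [hre]
    have h4 : ‖NormedSpace.exp (t • T) u‖ ≤ ‖πL‖ * ‖NormedSpace.exp (t • T) w‖ := by
      rw [← hπ_exp t]
      exact πL.le_opNorm _
    calc Real.exp (z.re * t) * ‖u‖
        ≤ Real.exp (z.re * t) * (Q t * ‖y t‖) :=
          mul_le_mul_of_nonneg_left (hu_norm t) (Real.exp_nonneg _)
      _ = Q t * (Real.exp (z.re * t) * ‖y t‖) := by ring
      _ = Q t * ‖NormedSpace.exp (t • T) u‖ := by rw [h3]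
      _ ≤ (Cn * t ^ n) * ‖NormedSpace.exp (t • T) u‖ :=
          mul_le_mul_of_nonneg_right (hQ_le t ht) (norm_nonneg _)
      _ ≤ (Cn * t ^ n) * (‖πL‖ * ‖NormedSpace.exp (t • T) w‖) := by
          apply mul_le_mul_of_nonneg_left h4
          positivity
      _ = (‖πL‖ * (Cn * t ^ n)) * ‖NormedSpace.exp (t • T) w‖ := by ring
  -- exponential growth beats polynomial
  have hexp_pow : Tendsto (fun t : ℝ => Real.exp (z.re * t) / t ^ n) atTop atTop := by
    have h0 := Real.tendsto_exp_div_pow_atTop n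
    have h1 : Tendsto (fun t : ℝ => z.re * t) atTop atTop :=
      Tendsto.const_mul_atTop hz_re tendsto_id
    have h2 := (h0.comp h1).atTop_mul_const (show (0:ℝ) < z.re ^ n by positivity)
    refine h2.congr' ?_
    filter_upwards [eventually_gt_atTop 0] with t ht
    have h1' : t ≠ 0 := ne_of_gt ht
    have h2' : z.re ≠ 0 := ne_of_gt hz_re
    show Real.exp (z.re * t) / (z.re * t) ^ n * z.re ^ n = Real.exp (z.re * t) / t ^ n
    rw [mul_pow]
    field_simp
  have hg : Tendsto (fun t : ℝ =>
      (Real.exp (z.re * t) * ‖u‖) / (‖πL‖ * (Cn * t ^ n))) atTop atTop := by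
    have hpos : 0 < ‖u‖ / (‖πL‖ * Cn) := by positivity
    have h := hexp_pow.atTop_mul_const hpos
    refine h.congr' ?_
    filter_upwards [eventually_gt_atTop 0] with t ht
    have h1' : t ≠ 0 := ne_of_gt ht
    have h2' : ‖πL‖ ≠ 0 := ne_of_gt hCp
    have h3' : Cn ≠ 0 := ne_of_gt hCn
    show Real.exp (z.re * t) / t ^ n * (‖u‖ / (‖πL‖ * Cn))
        = Real.exp (z.re * t) * ‖u‖ / (‖πL‖ * (Cn * t ^ n))
    field_simp
  refine tendsto_atTop_mono' atTop ?_ hg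
  filter_upwards [eventually_ge_atTop 1] with t ht
  have ht0 : (0 : ℝ) < t := lt_of_lt_of_le one_pos ht
  have hpos : 0 < ‖πL‖ * (Cn * t ^ n) := by positivity
  rw [div_le_iff₀ hpos]
  rw [mul_comm (‖NormedSpace.exp (t • T) w‖)]
  exact hkey t ht

end KeyC

set_option maxHeartbeats 2000000 in
/-- if every eigenvalue of the complexification of an endomorphism `D`
of a finite-dimensional real normed space `V` has positive real part, then
`‖exp(tD)v‖ → ∞` as `t → ∞`, for every `v ∈ V` with `v ≠ 0`. -/
theorem stmt_15 {V : Type*} [NormedAddCommGroup V] [NormedSpace ℝ V]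
    [FiniteDimensional ℝ V] (D : V →L[ℝ] V)
    (heig : ∀ z : ℂ, Module.End.HasEigenvalue
      (LinearMap.baseChange ℂ (D : V →ₗ[ℝ] V)) z → 0 < z.re)
    (v : V) (hv : v ≠ 0) :
    Tendsto (fun t : ℝ => ‖NormedSpace.exp (t • D) v‖) atTop atTop := by
  classical
  let b : Module.Basis (Fin (Module.finrank ℝ V)) ℝ V := Module.finBasis ℝ V
  let g : (ℂ ⊗[ℝ] V) ≃ₗ[ℂ] (Fin (Module.finrank ℝ V) → ℂ) := (b.baseChange ℂ).equivFun
  let Tlin : (Fin (Module.finrank ℝ V) → ℂ) →ₗ[ℂ] (Fin (Module.finrank ℝ V) → ℂ) :=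
    g.conj (LinearMap.baseChange ℂ (D : V →ₗ[ℝ] V))
  let T : (Fin (Module.finrank ℝ V) → ℂ) →L[ℂ] (Fin (Module.finrank ℝ V) → ℂ) :=
    LinearMap.toContinuousLinearMap Tlin
  let ρlin : V →ₗ[ℝ] (Fin (Module.finrank ℝ V) → ℂ) :=
    { toFun := fun x => g ((1 : ℂ) ⊗ₜ[ℝ] x)
      map_add' := by
        intro x y
        show g ((1 : ℂ) ⊗ₜ[ℝ] (x + y)) = g ((1 : ℂ) ⊗ₜ[ℝ] x) + g ((1 : ℂ) ⊗ₜ[ℝ] y)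
        rw [TensorProduct.tmul_add, map_add]
      map_smul' := by
        intro r x
        show g ((1 : ℂ) ⊗ₜ[ℝ] (r • x)) = r • g ((1 : ℂ) ⊗ₜ[ℝ] x)
        rw [TensorProduct.tmul_smul, ← algebraMap_smul ℂ r ((1 : ℂ) ⊗ₜ[ℝ] x), map_smul,
          algebraMap_smul] }
  let ρ : V →L[ℝ] (Fin (Module.finrank ℝ V) → ℂ) := LinearMap.toContinuousLinearMap ρlin
  have hρ_apply : ∀ x : V, ρ x = g ((1 : ℂ) ⊗ₜ[ℝ] x) := fun x => rfl
  have hT_apply : ∀ y, T y = Tlin y := fun y => rfl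
  -- intertwining
  have hint : ∀ x : V, T (ρ x) = ρ (D x) := by
    intro x
    rw [hρ_apply, hρ_apply, hT_apply]
    have h1 : Tlin (g ((1 : ℂ) ⊗ₜ[ℝ] x))
        = g ((LinearMap.baseChange ℂ (D : V →ₗ[ℝ] V)) ((1 : ℂ) ⊗ₜ[ℝ] x)) := by
      have h0 := LinearEquiv.conj_apply_apply g (LinearMap.baseChange ℂ (D : V →ₗ[ℝ] V))
        (g ((1 : ℂ) ⊗ₜ[ℝ] x))
      rwa [LinearEquiv.symm_apply_apply] at h0
    rw [h1, LinearMap.baseChange_tmul]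
    rfl
  -- exp intertwining
  have hexp : ∀ (t : ℝ) (x : V),
      NormedSpace.exp (t • T) (ρ x) = ρ (NormedSpace.exp (t • D) x) := by
    intro t x
    have hint' : ∀ x : V, (t • T) (ρ x) = ρ ((t • D) x) := by
      intro x
      simp only [ContinuousLinearMap.smul_apply]
      rw [hint x, ← map_smul]
    have hpow : ∀ (k : ℕ) (x : V), ((t • T) ^ k) (ρ x) = ρ (((t • D) ^ k) x) := by
      intro k
      induction k with
      | zero => intro x; simp
      | succ k ih =>
        intro x
        rw [pow_succ', pow_succ']
        simp only [ContinuousLinearMap.mul_apply]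
        rw [ih, hint']
    have h1 : HasSum (fun k : ℕ => ((k.factorial : ℝ))⁻¹ • (((t • D) ^ k) x))
        (NormedSpace.exp (t • D) x) := by
      have h0 := NormedSpace.exp_series_hasSum_exp' (𝕂 := ℝ) (t • D)
      have := h0.mapL (ContinuousLinearMap.apply ℝ V x)
      simpa using this
    have h2 := h1.mapL ρ
    have heq : (fun k : ℕ => ρ (((k.factorial : ℝ))⁻¹ • (((t • D) ^ k) x)))
        = fun k : ℕ => ((k.factorial : ℂ))⁻¹ • (((t • T) ^ k) (ρ x)) := by
      funext k
      rw [map_smul, hpow k x]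
      rw [← algebraMap_smul ℂ (((k.factorial : ℝ))⁻¹) (ρ (((t • D) ^ k) x)),
        Complex.coe_algebraMap]
      norm_num
    rw [heq] at h2
    have h3 : HasSum (fun k : ℕ => ((k.factorial : ℂ))⁻¹ • (((t • T) ^ k) (ρ x)))
        (NormedSpace.exp (t • T) (ρ x)) := by
      have h0 := NormedSpace.exp_series_hasSum_exp' (𝕂 := ℂ) (t • T)
      have := h0.mapL (ContinuousLinearMap.apply ℂ (Fin (Module.finrank ℝ V) → ℂ) (ρ x))
      simpa using this
    exact h3.unique h2
  -- eigenvalue transfer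
  have heigT : ∀ z : ℂ,
      Module.End.HasEigenvalue (T : (Fin (Module.finrank ℝ V) → ℂ) →ₗ[ℂ] _) z → 0 < z.re := by
    intro z hz
    apply heig z
    obtain ⟨x, hx⟩ := hz.exists_hasEigenvector
    have hTx : Tlin x = z • x := by
      have := Module.End.mem_eigenspace_iff.mp hx.1
      rwa [LinearMap.coe_toContinuousLinearMap Tlin] at this
    refine Module.End.hasEigenvalue_of_hasEigenvector (x := g.symm x) ⟨?_, ?_⟩
    · rw [Module.End.mem_eigenspace_iff]
      have h2 : g ((LinearMap.baseChange ℂ (D : V →ₗ[ℝ] V)) (g.symm x)) = z • x := by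
        have h3 : Tlin x = g ((LinearMap.baseChange ℂ (D : V →ₗ[ℝ] V)) (g.symm x)) :=
          LinearEquiv.conj_apply_apply g _ x
        rw [← h3, hTx]
      have h4 := congrArg g.symm h2
      rw [LinearEquiv.symm_apply_apply, map_smul] at h4
      exact h4
    · simpa using hx.2
  -- ρ v ≠ 0
  have hρv : ρ v ≠ 0 := by
    intro h
    have h1 : g ((1 : ℂ) ⊗ₜ[ℝ] v) = 0 := h
    have h2 : (1 : ℂ) ⊗ₜ[ℝ] v = 0 := by
      have := congrArg g.symm h1
      simpa using this
    apply hv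
    have h4 : ∀ i, b.repr v i = 0 := by
      intro i
      have h5 : ((b.baseChange ℂ).repr ((1 : ℂ) ⊗ₜ[ℝ] v)) i = b.repr v i • (1 : ℂ) :=
        Module.Basis.baseChange_repr_tmul ℂ b 1 v i
      rw [h2] at h5
      simp only [map_zero, Finsupp.coe_zero, Pi.zero_apply] at h5
      have h6 := h5.symm
      rw [smul_eq_zero] at h6
      rcases h6 with h6 | h6
      · exact h6
      · exact absurd h6 one_ne_zero
    have h7 : b.repr v = 0 := by
      ext i
      exact h4 i
    have := b.repr.map_eq_zero_iff.mp h7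
    exact this
  -- conclude
  have hkey := keyC T heigT (ρ v) hρv
  have hρ_ne : ρ ≠ 0 := by
    intro h
    rw [h, ContinuousLinearMap.zero_apply] at hρv
    exact hρv rfl
  have hρ_pos : 0 < ‖ρ‖ := norm_pos_iff.mpr hρ_ne
  have hdiv := hkey.atTop_div_const hρ_pos
  refine tendsto_atTop_mono ?_ hdiv
  intro t
  rw [div_le_iff₀ hρ_pos]
  calc ‖NormedSpace.exp (t • T) (ρ v)‖ = ‖ρ (NormedSpace.exp (t • D) v)‖ := by
        rw [hexp t v]
    _ ≤ ‖ρ‖ * ‖NormedSpace.exp (t • D) v‖ := ρ.le_opNorm _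
    _ = ‖NormedSpace.exp (t • D) v‖ * ‖ρ‖ := mul_comm _ _
end
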